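/- arXiv:2206.07872 — 7 statements merged into one kernel-verified Lean document; each statement's English description precedes it below -/
import Mathlib

section
/- Every 2-edge-connected subgraph of a minimally 2-edge-connected graph is itself minimally 2-edge-connected. -/
open SimpleGraph

open scoped Classical in
noncomputable def adjMat {V : Type} [Fintype V] (G : SimpleGraph V) : Matrix V V ℝ :=
  Matrix.of fun i j => if G.Adj i j then (1 : ℝ) else 0

noncomputable def specRad {V : Type} [Fintype V] [DecidableEq V] (G : SimpleGraph V) : ℝ :=
  sSup (spectrum ℝ (adjMat G))

def TwoEdgeConnected {V : Type} (G : SimpleGraph V) : Prop :=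
  G.Connected ∧ G.edgeSet.Nonempty ∧ ∀ e ∈ G.edgeSet, (G.deleteEdges {e}).Connected

def MinTwoEdgeConnected {V : Type} (G : SimpleGraph V) : Prop :=
  TwoEdgeConnected G ∧ ∀ e ∈ G.edgeSet, ¬ TwoEdgeConnected (G.deleteEdges {e})

def TwoConnected {V : Type} (G : SimpleGraph V) : Prop :=
  3 ≤ Nat.card V ∧ ∀ v : V, ((⊤ : G.Subgraph).deleteVerts {v}).coe.Connected

def MinTwoConnected {V : Type} (G : SimpleGraph V) : Prop :=
  TwoConnected G ∧ ∀ e ∈ G.edgeSet, ¬ TwoConnected (G.deleteEdges {e})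

def HasChord {V : Type} (G : SimpleGraph V) {v : V} (c : G.Walk v v) : Prop :=
  ∃ a b, G.Adj a b ∧ a ∈ c.support ∧ b ∈ c.support ∧ s(a, b) ∉ c.edges

/-- `K_{2,t}` with one edge subdivided: `Sum.inl 0, Sum.inl 1` are the two vertices of the
small part, `Sum.inl 2` is the subdivision vertex, `Sum.inr i` the large part. -/
def SK2 (t : ℕ) : SimpleGraph (Fin 3 ⊕ Fin t) :=
  SimpleGraph.fromRel (fun x y =>
    (x = Sum.inl 0 ∧ y = Sum.inl 2) ∨
    (∃ i : Fin t, x = Sum.inl 2 ∧ y = Sum.inr i ∧ i.val = 0) ∨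
    (∃ i : Fin t, x = Sum.inl 1 ∧ y = Sum.inr i) ∨
    (∃ i : Fin t, x = Sum.inl 0 ∧ y = Sum.inr i ∧ i.val ≠ 0))

/-- `K_{2,s} * K₃`: `inl 0, inl 1` the small part of `K_{2,s}`, a triangle on
`inl 0, inl 2, inl 3`, and `inr i` the large part. -/
def K2sK3 (t : ℕ) : SimpleGraph (Fin 4 ⊕ Fin t) :=
  SimpleGraph.fromRel (fun x y =>
    (x = Sum.inl 0 ∧ y = Sum.inl 2) ∨ (x = Sum.inl 0 ∧ y = Sum.inl 3) ∨
    (x = Sum.inl 2 ∧ y = Sum.inl 3) ∨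
    (∃ i : Fin t, (x = Sum.inl 0 ∨ x = Sum.inl 1) ∧ y = Sum.inr i))

/-- The friendship graph `F_t`: vertex `0` is the common center, the `i`-th triangle is
`{0, 2i+1, 2i+2}`. -/
def friendship (t : ℕ) : SimpleGraph (Fin (2 * t + 1)) :=
  SimpleGraph.fromRel (fun x y =>
    x = 0 ∨ (∃ i : Fin t, (x : ℕ) = 2 * i + 1 ∧ (y : ℕ) = 2 * i + 2))

/-- Disjoint union of two simple graphs. -/
def disjUnion {α β : Type} (G : SimpleGraph α) (H : SimpleGraph β) : SimpleGraph (α ⊕ β) :=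
  SimpleGraph.fromRel (fun x y =>
    (∃ a b, x = Sum.inl a ∧ y = Sum.inl b ∧ G.Adj a b) ∨
    (∃ a b, x = Sum.inr a ∧ y = Sum.inr b ∧ H.Adj a b))

/-- Identifying `v ∈ H` with `w ∈ K` in the disjoint union of `H` and `K`. -/
def wedge {α β : Type} (H : SimpleGraph α) (K : SimpleGraph β) (v : α) (w : β) :
    SimpleGraph (α ⊕ {b : β // b ≠ w}) :=
  SimpleGraph.fromRel (fun x y =>
    (∃ a b, x = Sum.inl a ∧ y = Sum.inl b ∧ H.Adj a b) ∨
    (∃ a b, x = Sum.inr a ∧ y = Sum.inr b ∧ K.Adj a.1 b.1) ∨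
    (∃ b, x = Sum.inl v ∧ y = Sum.inr b ∧ K.Adj w b.1))

def IsStarCenter {V : Type} (G : SimpleGraph V) (v : V) : Prop :=
  (∀ w, w ≠ v → G.Adj v w) ∧ ∀ a b, G.Adj a b → a = v ∨ b = v

private lemma reach_transfer {V : Type} {A B : SimpleGraph V}
    (h : ∀ u w, A.Adj u w → B.Reachable u w) :
    ∀ {x y : V}, A.Reachable x y → B.Reachable x y := by
  intro x y hr
  obtain ⟨W⟩ := hr
  induction W with
  | nil => exact SimpleGraph.Reachable.refl _
  | cons hadj _ ih => exact (h _ _ hadj).trans ih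

private lemma sym2_val_ne {V : Type} {S : Set V} {p q r t : S}
    (h : s(p, q) ≠ s(r, t)) : s(p.1, q.1) ≠ s(r.1, t.1) := by
  intro hE
  apply h
  rw [Sym2.eq_iff] at hE ⊢
  rcases hE with ⟨h1, h2⟩ | ⟨h1, h2⟩
  · exact Or.inl ⟨Subtype.ext h1, Subtype.ext h2⟩
  · exact Or.inr ⟨Subtype.ext h1, Subtype.ext h2⟩

theorem stmt0 {V : Type} (G : SimpleGraph V) (H : G.Subgraph)
    (hG : MinTwoEdgeConnected G) (hH : TwoEdgeConnected H.coe) :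
    MinTwoEdgeConnected H.coe := by
  classical
  refine ⟨hH, ?_⟩
  intro e
  induction e using Sym2.ind with
  | _ a b =>
  intro he hK
  rw [SimpleGraph.mem_edgeSet, Subgraph.coe_adj] at he
  have hab : G.Adj a.1 b.1 := H.adj_sub he
  have hKconn : (H.coe.deleteEdges {s(a, b)}).Connected := hK.1
  apply hG.2 s(a.1, b.1) ((SimpleGraph.mem_edgeSet _).mpr hab)
  refine ⟨hG.1.2.2 _ ((SimpleGraph.mem_edgeSet _).mpr hab), ?_, ?_⟩
  · -- nonempty edge set
    obtain ⟨g, hg⟩ := hK.2.1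
    revert hg
    induction g using Sym2.ind with
    | _ p q =>
    intro hg
    rw [SimpleGraph.mem_edgeSet, SimpleGraph.deleteEdges_adj] at hg
    refine ⟨s(p.1, q.1), (SimpleGraph.mem_edgeSet _).mpr ?_⟩
    rw [SimpleGraph.deleteEdges_adj]
    refine ⟨H.adj_sub (hg.1), ?_⟩
    simp only [Set.mem_singleton_iff]
    exact sym2_val_ne (by simpa using hg.2)
  · intro f hf
    rw [SimpleGraph.deleteEdges_deleteEdges]
    rw [SimpleGraph.edgeSet_deleteEdges] at hf
    have hfG : f ∈ G.edgeSet := hf.1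
    have hfne : f ≠ s(a.1, b.1) := by simpa using hf.2
    have hmem : ∀ {x y : V}, G.Adj x y → s(x, y) ≠ s(a.1, b.1) → s(x, y) ≠ f →
        (G.deleteEdges ({s(a.1, b.1)} ∪ {f})).Adj x y := by
      intro x y h1 h2 h3
      rw [SimpleGraph.deleteEdges_adj]
      refine ⟨h1, ?_⟩
      simp only [Set.mem_union, Set.mem_singleton_iff]
      tauto
    by_cases hHf : ∃ p q : H.verts, H.coe.Adj p q ∧ s(p.1, q.1) = f
    · obtain ⟨p, q, hpq, hfe⟩ := hHf
      have hne : s(p, q) ≠ s(a, b) := by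
        intro hcontra
        apply hfne
        rw [← hfe]
        have := congrArg (Sym2.map (Subtype.val)) hcontra
        simpa [Sym2.map_pair_eq] using this
      have hpqK : s(p, q) ∈ (H.coe.deleteEdges {s(a, b)}).edgeSet := by
        rw [SimpleGraph.mem_edgeSet, SimpleGraph.deleteEdges_adj]
        exact ⟨hpq, by simpa using hne⟩
      have hconn2 := hK.2.2 _ hpqK
      have hreachPQ : (G.deleteEdges ({s(a.1, b.1)} ∪ {f})).Reachable p.1 q.1 := by
        refine SimpleGraph.Reachable.map ⟨Subtype.val, ?_⟩ (hconn2.preconnected p q)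
        intro u w huw
        rw [SimpleGraph.deleteEdges_adj, SimpleGraph.deleteEdges_adj] at huw
        exact hmem (H.adj_sub (huw.1.1))
          (sym2_val_ne (by simpa using huw.1.2))
          (by rw [← hfe]; exact sym2_val_ne (by simpa using huw.2))
      rw [SimpleGraph.connected_iff]
      refine ⟨?_, hG.1.1.nonempty⟩
      intro x y
      refine reach_transfer ?_ ((hG.1.2.2 s(a.1, b.1)
        ((SimpleGraph.mem_edgeSet _).mpr hab)).preconnected x y)
      intro u w huw
      rw [SimpleGraph.deleteEdges_adj] at huw
      by_cases hF : s(u, w) = f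
      · have hE : s(u, w) = s(p.1, q.1) := by rw [hF, ← hfe]
        rw [Sym2.eq_iff] at hE
        rcases hE with ⟨rfl, rfl⟩ | ⟨rfl, rfl⟩
        · exact hreachPQ
        · exact hreachPQ.symm
      · exact (hmem huw.1 (by simpa using huw.2) hF).reachable
    · push_neg at hHf
      have hreachAB : (G.deleteEdges ({s(a.1, b.1)} ∪ {f})).Reachable a.1 b.1 := by
        refine SimpleGraph.Reachable.map ⟨Subtype.val, ?_⟩ (hKconn.preconnected a b)
        intro u w huw
        rw [SimpleGraph.deleteEdges_adj] at huw
        exact hmem (H.adj_sub (huw.1))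
          (sym2_val_ne (by simpa using huw.2)) (hHf u w huw.1)
      rw [SimpleGraph.connected_iff]
      refine ⟨?_, hG.1.1.nonempty⟩
      intro x y
      refine reach_transfer ?_ ((hG.1.2.2 s(a.1, b.1)
        ((SimpleGraph.mem_edgeSet _).mpr hab)).preconnected x y)
      intro u w huw
      rw [SimpleGraph.deleteEdges_adj] at huw
      by_cases hF : s(u, w) = f
      · have hGf : (G.deleteEdges {f}).Connected := hG.1.2.2 f hfG
        refine reach_transfer ?_ (hGf.preconnected u w)
        intro u' w' huw'
        rw [SimpleGraph.deleteEdges_adj] at huw'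
        by_cases hE : s(u', w') = s(a.1, b.1)
        · rw [Sym2.eq_iff] at hE
          rcases hE with ⟨rfl, rfl⟩ | ⟨rfl, rfl⟩
          · exact hreachAB
          · exact hreachAB.symm
        · exact (hmem huw'.1 hE (by simpa using huw'.2)).reachable
      · exact (hmem huw.1 (by simpa using huw.2) hF).reachable
end

section
/- If G is a minimally 2-edge-connected graph, then no cycle of G has a chord. -/
open SimpleGraph

section Aux

variable {V : Type} {G : SimpleGraph V}

lemma mem_support_rotate_iff [DecidableEq V] {u v x : V} (c : G.Walk v v) (h : u ∈ c.support) :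
    x ∈ (c.rotate u h).support ↔ x ∈ c.support := by
  conv_rhs => rw [← c.take_spec h]
  rw [Walk.rotate, Walk.mem_support_append_iff, Walk.mem_support_append_iff, or_comm]

lemma exists_arc [DecidableEq V] {v a b : V}
    (c : G.Walk v v) (hc : c.IsTrail) (ha : a ∈ c.support) (hb : b ∈ c.support)
    (e f : Sym2 V) (he : e ∉ c.edges) :
    ∃ q : G.Walk a b, e ∉ q.edges ∧ f ∉ q.edges := by
  have hb' : b ∈ (c.rotate a ha).support := (mem_support_rotate_iff c ha).mpr hb
  set c' := c.rotate a ha with hc'def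
  have hc' : c'.IsTrail := hc.rotate ha
  have he' : e ∉ c'.edges := fun h => he ((c.rotate_edges a ha).mem_iff.mp h)
  have hsplit : c'.edges = (c'.takeUntil b hb').edges ++ (c'.dropUntil b hb').edges := by
    rw [← Walk.edges_append, Walk.take_spec]
  by_cases hf : f ∈ (c'.takeUntil b hb').edges
  · refine ⟨(c'.dropUntil b hb').reverse, ?_, ?_⟩
    · rw [Walk.edges_reverse, List.mem_reverse]
      exact fun h => he' (Walk.edges_dropUntil_subset _ _ h)
    · rw [Walk.edges_reverse, List.mem_reverse]
      have hnd : ((c'.takeUntil b hb').edges ++ (c'.dropUntil b hb').edges).Nodup := by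
        rw [← hsplit]; exact hc'.edges_nodup
      exact List.disjoint_of_nodup_append hnd hf
  · exact ⟨c'.takeUntil b hb', fun h => he' (Walk.edges_takeUntil_subset _ _ h), hf⟩

lemma conn_del (hG : G.Connected) {u v : V}
    (p : (G.deleteEdges {s(u, v)}).Walk u v) : (G.deleteEdges {s(u, v)}).Connected := by
  rw [connected_iff] at hG ⊢
  refine ⟨fun x y => ?_, hG.2⟩
  obtain ⟨w⟩ := hG.1 x y
  induction w with
  | nil => exact Reachable.refl _
  | @cons x' z _ h w ih =>
    refine Reachable.trans ?_ ih
    by_cases hxz : s(x', z) = s(u, v)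
    · rw [Sym2.eq_iff] at hxz
      rcases hxz with ⟨rfl, rfl⟩ | ⟨rfl, rfl⟩
      · exact ⟨p⟩
      · exact ⟨p.reverse⟩
    · exact Adj.reachable (by simp only [deleteEdges_adj, Set.mem_singleton_iff]; exact ⟨h, hxz⟩)

end Aux

theorem stmt1 {V : Type} (G : SimpleGraph V) (hG : MinTwoEdgeConnected G)
    {v : V} (c : G.Walk v v) (hc : c.IsCycle) : ¬ HasChord G c := by
  classical
  rintro ⟨a, b, hab, ha, hb, he⟩
  have hmem : s(a, b) ∈ G.edgeSet := hab
  obtain ⟨hGc, -, hGd⟩ := hG.1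
  refine hG.2 _ hmem ⟨?_, ?_, ?_⟩
  · -- connectivity of G − e
    obtain ⟨q, hq1, -⟩ := exists_arc c hc.isTrail ha hb s(a, b) s(a, b) he
    refine conn_del hGc (q.transfer _ fun e' he' => ?_)
    rw [edgeSet_deleteEdges, Set.mem_diff, Set.mem_singleton_iff]
    exact ⟨q.edges_subset_edgeSet he', fun h => hq1 (h ▸ he')⟩
  · -- edge set nonempty
    have h3 : 3 ≤ c.length := hc.three_le_length
    have : c.edges ≠ [] := by
      intro h
      have := c.length_edges
      rw [h] at this
      simp at this
      omega
    obtain ⟨e', he'⟩ := List.exists_mem_of_ne_nil _ this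
    refine ⟨e', ?_⟩
    rw [edgeSet_deleteEdges, Set.mem_diff, Set.mem_singleton_iff]
    exact ⟨c.edges_subset_edgeSet he', fun h => he (h ▸ he')⟩
  · -- deleting any further edge keeps connectivity
    intro f hf
    rw [edgeSet_deleteEdges, Set.mem_diff, Set.mem_singleton_iff] at hf
    have hHc : (G.deleteEdges {f}).Connected := hGd f hf.1
    obtain ⟨q, hq1, hq2⟩ := exists_arc c hc.isTrail ha hb s(a, b) f he
    have p : ((G.deleteEdges {f}).deleteEdges {s(a, b)}).Walk a b := by
      refine q.transfer _ fun e' he' => ?_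
      rw [edgeSet_deleteEdges, edgeSet_deleteEdges, Set.mem_diff, Set.mem_diff,
        Set.mem_singleton_iff, Set.mem_singleton_iff]
      exact ⟨⟨q.edges_subset_edgeSet he', fun h => hq2 (h ▸ he')⟩, fun h => hq1 (h ▸ he')⟩
    have := conn_del hHc p
    have heq : (G.deleteEdges {s(a, b)}).deleteEdges {f}
        = (G.deleteEdges {f}).deleteEdges {s(a, b)} := by
      rw [deleteEdges_deleteEdges, deleteEdges_deleteEdges, Set.union_comm]
    rwa [heq]
end

section
/- A minimally 2-connected graph with more than three vertices contains no triangle. -/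
open SimpleGraph

variable {V : Type}

def Avoid (G : SimpleGraph V) (v u w : V) : Prop := ∃ p : G.Walk u w, v ∉ p.support

namespace Avoid

variable {G : SimpleGraph V} {v u w x : V}

theorem ne_left (h : Avoid G v u w) : u ≠ v := by
  obtain ⟨p, hp⟩ := h
  rintro rfl; exact hp p.start_mem_support

theorem ne_right (h : Avoid G v u w) : w ≠ v := by
  obtain ⟨p, hp⟩ := h
  rintro rfl; exact hp p.end_mem_support

theorem refl (h : u ≠ v) : Avoid G v u u :=
  ⟨SimpleGraph.Walk.nil, by simp [h.symm]⟩

theorem symm (h : Avoid G v u w) : Avoid G v w u := by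
  obtain ⟨p, hp⟩ := h
  exact ⟨p.reverse, by simpa using hp⟩

theorem trans (h : Avoid G v u w) (h' : Avoid G v w x) : Avoid G v u x := by
  obtain ⟨p, hp⟩ := h
  obtain ⟨q, hq⟩ := h'
  refine ⟨p.append q, ?_⟩
  rw [SimpleGraph.Walk.support_append]
  intro hm
  rcases List.mem_append.1 hm with hm | hm
  · exact hp hm
  · exact hq (List.mem_of_mem_tail hm)

theorem of_adj (h : G.Adj u w) (hu : u ≠ v) (hw : w ≠ v) : Avoid G v u w :=
  ⟨h.toWalk, by simp [hu.symm, hw.symm]⟩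

end Avoid

section Transfer

variable {G : SimpleGraph V} {v u w : V}

/-- membership in deleted-verts top subgraph -/
theorem mem_dv {a v : V} {G : SimpleGraph V} (h : a ≠ v) :
    a ∈ ((⊤ : G.Subgraph).deleteVerts {v}).verts := by
  simp [SimpleGraph.Subgraph.deleteVerts_verts, h]

theorem ne_of_mem_dv {a v : V} {G : SimpleGraph V}
    (h : a ∈ ((⊤ : G.Subgraph).deleteVerts {v}).verts) : a ≠ v := by
  intro hq; subst hq
  rw [SimpleGraph.Subgraph.deleteVerts_verts] at h
  exact h.2 rfl

theorem avoid_of_reachable (hu : u ≠ v) (hw : w ≠ v)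
    (h : (((⊤ : G.Subgraph).deleteVerts {v}).coe).Reachable ⟨u, mem_dv hu⟩ ⟨w, mem_dv hw⟩) :
    Avoid G v u w := by
  obtain ⟨q⟩ := h
  refine ⟨q.map ((⊤ : G.Subgraph).deleteVerts {v}).hom, ?_⟩
  show v ∉ (q.map ((⊤ : G.Subgraph).deleteVerts {v}).hom).support
  rw [SimpleGraph.Walk.support_map]
  intro hm
  obtain ⟨a, _, ha⟩ := List.mem_map.1 hm
  exact ne_of_mem_dv a.2 ha

theorem reachable_of_avoid (h : Avoid G v u w) :
    (((⊤ : G.Subgraph).deleteVerts {v}).coe).Reachable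
      ⟨u, mem_dv h.ne_left⟩ ⟨w, mem_dv h.ne_right⟩ := by
  obtain ⟨p, hp⟩ := h
  induction p with
  | nil => rfl
  | @cons a b c hab p ih =>
    have ha : a ≠ v := fun h => hp (h ▸ SimpleGraph.Walk.start_mem_support _)
    have hb : b ≠ v := fun h => hp (by
      subst h; exact List.mem_cons_of_mem _ (SimpleGraph.Walk.start_mem_support p))
    have hp' : v ∉ p.support := fun h => hp (List.mem_cons_of_mem _ h)
    refine SimpleGraph.Reachable.trans ?_ (ih hp')
    exact SimpleGraph.Adj.reachable (by
      simp only [SimpleGraph.Subgraph.coe_adj, SimpleGraph.Subgraph.deleteVerts_adj]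
      exact ⟨trivial, by simp [ha], trivial, by simp [hb], hab⟩)

end Transfer

section Key

variable {G : SimpleGraph V} {x y z v u w a b : V}

theorem key2 (p : G.Walk u w) (hp : v ∉ p.support) :
    Avoid (G.deleteEdges {s(x, y)}) v u w ∨ Avoid (G.deleteEdges {s(x, y)}) v u x ∨
      Avoid (G.deleteEdges {s(x, y)}) v u y := by
  induction p with
  | nil =>
    exact Or.inl (Avoid.refl fun h => hp (by simp [h]))
  | @cons a b c hab q ih =>
    have ha : a ≠ v := fun h => hp (h ▸ SimpleGraph.Walk.start_mem_support _)
    have hb : b ≠ v := fun h => hp (by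
      subst h; exact List.mem_cons_of_mem _ (SimpleGraph.Walk.start_mem_support q))
    have hp' : v ∉ q.support := fun h => hp (List.mem_cons_of_mem _ h)
    by_cases he : s(a, b) = s(x, y)
    · rw [Sym2.eq_iff] at he
      rcases he with ⟨rfl, rfl⟩ | ⟨rfl, rfl⟩
      · exact Or.inr (Or.inl (Avoid.refl ha))
      · exact Or.inr (Or.inr (Avoid.refl ha))
    · have hadj : (G.deleteEdges {s(x, y)}).Adj a b := by
        rw [SimpleGraph.deleteEdges_adj]
        exact ⟨hab, by simpa using he⟩
      rcases ih hp' with h | h | h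
      · exact Or.inl ((Avoid.of_adj hadj ha hb).trans h)
      · exact Or.inr (Or.inl ((Avoid.of_adj hadj ha hb).trans h))
      · exact Or.inr (Or.inr ((Avoid.of_adj hadj ha hb).trans h))

theorem key1 (h : x ≠ v → y ≠ v → Avoid (G.deleteEdges {s(x, y)}) v x y)
    (p : G.Walk u w) (hp : v ∉ p.support) : Avoid (G.deleteEdges {s(x, y)}) v u w := by
  have c1 := key2 (x := x) (y := y) p hp
  have c2 := key2 (x := x) (y := y) p.reverse (by simpa using hp)
  rcases c1 with h1 | h1 | h1
  · exact h1
  · rcases c2 with h2 | h2 | h2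
    · exact h2.symm
    · exact h1.trans h2.symm
    · exact h1.trans ((h h1.ne_right h2.ne_right).trans h2.symm)
  · rcases c2 with h2 | h2 | h2
    · exact h2.symm
    · exact h1.trans ((h h2.ne_right h1.ne_right).symm.trans h2.symm)
    · exact h1.trans h2.symm

end Key

section Main

variable {G : SimpleGraph V} {x y z u w : V}

theorem exists_nonavoid [Fintype V] (hc : 3 ≤ Fintype.card V)
    (h : ¬ TwoConnected G) : ∃ v a b, ¬ Avoid G v a b ∧ a ≠ v ∧ b ≠ v := by
  rw [TwoConnected] at h
  push_neg at h
  obtain ⟨v, hv⟩ := h (by rwa [Nat.card_eq_fintype_card])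
  rw [SimpleGraph.connected_iff] at hv
  push_neg at hv
  obtain ⟨u, hu⟩ := Fintype.exists_ne_of_one_lt_card (by omega) v
  have hne : Nonempty ((⊤ : G.Subgraph).deleteVerts {v}).verts := ⟨⟨u, mem_dv hu⟩⟩
  obtain ⟨a, b, hab⟩ : ∃ a b, ¬ ((⊤ : G.Subgraph).deleteVerts {v}).coe.Reachable a b := by
    by_contra hco
    push_neg at hco
    exact (hv (fun a b => hco a b)).false hne.some
  refine ⟨v, a.1, b.1, ?_, ne_of_mem_dv a.2, ne_of_mem_dv b.2⟩
  intro hav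
  exact hab (reachable_of_avoid hav)

theorem adj_del {a b : V} (h : G.Adj a b) (e : Sym2 V) (ha : a ∉ e) :
    (G.deleteEdges {e}).Adj a b := by
  rw [SimpleGraph.deleteEdges_adj]
  refine ⟨h, ?_⟩
  simp only [Set.mem_singleton_iff]
  rintro rfl
  exact ha (Sym2.mem_mk_left a b)

theorem cutfact [Fintype V] (hc : 3 ≤ Fintype.card V)
    (havoid : ∀ v a b : V, a ≠ v → b ≠ v → Avoid G v a b)
    (hxz : G.Adj x z) (hyz : G.Adj y z)
    (hmin : ¬ TwoConnected (G.deleteEdges {s(x, y)})) :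
    ¬ Avoid (G.deleteEdges {s(x, y)}) z x y := by
  intro hA
  obtain ⟨v, a, b, hnav, hav, hbv⟩ := exists_nonavoid hc hmin
  obtain ⟨p, hp⟩ := havoid v a b hav hbv
  refine hnav (key1 ?_ p hp)
  intro hxv hyv
  by_cases hvz : v = z
  · exact hvz ▸ hA
  · have hzm : z ∉ s(x, y) := by
      rw [Sym2.mem_iff]
      push_neg
      exact ⟨hxz.ne', hyz.ne'⟩
    have h1 : (G.deleteEdges {s(x, y)}).Adj x z := (adj_del hxz.symm _ hzm).symm
    have h2 : (G.deleteEdges {s(x, y)}).Adj z y := adj_del hyz.symm _ hzm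
    exact (Avoid.of_adj h1 hxv (fun h => hvz h.symm)).trans
      (Avoid.of_adj h2 (fun h => hvz h.symm) hyv)

theorem avoid_step {e : Sym2 V} (p : (G.deleteEdges {e}).Walk u w)
    (hz : z ∉ p.support) (hy : y ∉ p.support) :
    Avoid (G.deleteEdges {s(x, z)}) y u w := by
  have he : ∀ ed ∈ p.edges, ed ∈ (G.deleteEdges {s(x, z)}).edgeSet := by
    intro ed hed
    rw [SimpleGraph.edgeSet_deleteEdges]
    refine ⟨?_, ?_⟩
    · have h1 := p.edges_subset_edgeSet hed
      rw [SimpleGraph.edgeSet_deleteEdges] at h1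
      exact h1.1
    · simp only [Set.mem_singleton_iff]
      rintro rfl
      exact hz (p.snd_mem_support_of_mem_edges hed)
  exact ⟨p.transfer _ he, by rwa [SimpleGraph.Walk.support_transfer]⟩

theorem degfact (hxy : G.Adj x y) (hxz : G.Adj x z) (hyz : G.Adj y z)
    (cxy : ¬ Avoid (G.deleteEdges {s(x, y)}) z x y)
    (cxz : ¬ Avoid (G.deleteEdges {s(x, z)}) y x z)
    (cyz : ¬ Avoid (G.deleteEdges {s(y, z)}) x y z)
    (havoid : ∀ v a b : V, a ≠ v → b ≠ v → Avoid G v a b) :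
    ∀ w, G.Adj z w → w = x ∨ w = y := by
  classical
  intro w hzw
  by_contra hcon
  push_neg at hcon
  obtain ⟨hwx, hwy⟩ := hcon
  obtain ⟨p, hp⟩ := havoid z w x hzw.ne' hxz.ne
  have hA : Avoid (G.deleteEdges {s(x, y)}) z w x ∨
      Avoid (G.deleteEdges {s(x, y)}) z w y := by
    rcases key2 (x := x) (y := y) p hp with h | h | h
    exacts [Or.inl h, Or.inl h, Or.inr h]
  rcases hA with hA1 | hA1
  · obtain ⟨q, hq⟩ := hA1
    -- w is connected to x avoiding z in G - xy; show y not on q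
    have hyq : y ∉ q.support := by
      intro hy
      have hv : Avoid (G.deleteEdges {s(x, y)}) z y x :=
        ⟨q.dropUntil y hy, fun hm =>
          hq (SimpleGraph.Walk.support_dropUntil_subset q hy hm)⟩
      exact cxy hv.symm
    have h1 : Avoid (G.deleteEdges {s(x, z)}) y w x := avoid_step (x := x) q hq hyq
    have hwm : w ∉ s(x, z) := by
      rw [Sym2.mem_iff]
      push_neg
      exact ⟨hwx, hzw.ne'⟩
    have h2 : (G.deleteEdges {s(x, z)}).Adj z w := (adj_del hzw.symm _ hwm).symm
    exact cxz (((Avoid.of_adj h2 hyz.ne' hwy).trans h1).symm)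
  · obtain ⟨q, hq⟩ := hA1
    have hxq : x ∉ q.support := by
      intro hx
      exact cxy ⟨q.dropUntil x hx, fun hm =>
        hq (SimpleGraph.Walk.support_dropUntil_subset q hx hm)⟩
    have h1 : Avoid (G.deleteEdges {s(y, z)}) x w y := avoid_step (x := y) q hq hxq
    have hwm : w ∉ s(y, z) := by
      rw [Sym2.mem_iff]
      push_neg
      exact ⟨hwy, hzw.ne'⟩
    have h2 : (G.deleteEdges {s(y, z)}).Adj z w := (adj_del hzw.symm _ hwm).symm
    exact cyz (((Avoid.of_adj h2 hxz.ne' hwx).trans h1).symm)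

theorem finlem (Ny : ∀ w, G.Adj y w → w = z ∨ w = x)
    (Nz : ∀ w, G.Adj z w → w = x ∨ w = y) :
    ∀ {u c : V} (q : G.Walk u c), x ∉ q.support → c = y ∨ c = z → u = y ∨ u = z := by
  intro u c q
  induction q with
  | nil => exact fun _ h => h
  | @cons a b c hab q ih =>
    intro hx hc
    have hax : a ≠ x := fun h => hx (h ▸ SimpleGraph.Walk.start_mem_support _)
    have hx' : x ∉ q.support := fun h => hx (List.mem_cons_of_mem _ h)
    rcases ih hx' hc with rfl | rfl
    · rcases Ny a hab.symm with rfl | h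
      · exact Or.inr rfl
      · exact absurd h hax
    · rcases Nz a hab.symm with h | rfl
      · exact absurd h hax
      · exact Or.inl rfl

end Main

theorem stmt4 {V : Type} [Fintype V] (G : SimpleGraph V) (hG : MinTwoConnected G)
    (hcard : 3 < Fintype.card V) : G.CliqueFree 3 := by
  classical
  intro t ht
  rw [SimpleGraph.is3Clique_iff] at ht
  obtain ⟨x, y, z, hxy, hxz, hyz, -⟩ := ht
  have hc : 3 ≤ Fintype.card V := by omega
  have havoid : ∀ v a b : V, a ≠ v → b ≠ v → Avoid G v a b := by
    intro v a b ha hb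
    exact avoid_of_reachable ha hb ((hG.1.2 v).preconnected _ _)
  have hmem : ∀ a b : V, G.Adj a b → s(a, b) ∈ G.edgeSet := fun a b h => h
  have cxy := cutfact hc havoid hxz hyz (hG.2 _ (hmem _ _ hxy))
  have cxz := cutfact hc havoid hxy hyz.symm (hG.2 _ (hmem _ _ hxz))
  have cyz := cutfact hc havoid hxy.symm hxz.symm (hG.2 _ (hmem _ _ hyz))
  have cyx : ¬ Avoid (G.deleteEdges {s(y, x)}) z y x := by
    rw [Sym2.eq_swap]
    exact fun h => cxy h.symm
  have czx : ¬ Avoid (G.deleteEdges {s(z, x)}) y z x := by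
    rw [Sym2.eq_swap]
    exact fun h => cxz h.symm
  have czy : ¬ Avoid (G.deleteEdges {s(z, y)}) x z y := by
    rw [Sym2.eq_swap]
    exact fun h => cyz h.symm
  have Nz := degfact hxy hxz hyz cxy cxz cyz havoid
  have Ny := degfact (show G.Adj z x from hxz.symm) (show G.Adj z y from hyz.symm)
    hxy czx czy cxy havoid
  -- fourth vertex
  have hW : ∃ w : V, w ≠ x ∧ w ≠ y ∧ w ≠ z := by
    by_contra hco
    push_neg at hco
    have hsub : (Finset.univ : Finset V) ⊆ {x, y, z} := by
      intro a _
      simp only [Finset.mem_insert, Finset.mem_singleton]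
      by_cases h1 : a = x
      · exact Or.inl h1
      by_cases h2 : a = y
      · exact Or.inr (Or.inl h2)
      exact Or.inr (Or.inr (hco a h1 h2))
    have hle := Finset.card_le_card hsub
    have h3 : ({x, y, z} : Finset V).card ≤ 3 :=
      (Finset.card_insert_le _ _).trans (by
        have := Finset.card_insert_le y ({z} : Finset V)
        simp only [Finset.card_singleton] at this
        omega)
    rw [Finset.card_univ] at hle
    omega
  obtain ⟨w, hwx, hwy, hwz⟩ := hW
  obtain ⟨p, hp⟩ := havoid x w y hwx hxy.ne'
  rcases finlem Ny Nz p hp (Or.inl rfl) with h | h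
  · exact hwy h
  · exact hwz h
end

section
/- Every cycle of a minimally 2-connected graph contains at least two vertices of degree two (degree taken in the whole graph). -/
open SimpleGraph

set_option linter.unusedVariables false
set_option linter.unusedSectionVars false

namespace MinTwoAux

variable {V : Type} [Fintype V]

/-- There is a walk from `x` to `y` avoiding vertex `w`. -/
def Avoid (H : SimpleGraph V) (w x y : V) : Prop := ∃ p : H.Walk x y, w ∉ p.support

lemma Avoid.ne_fst {H : SimpleGraph V} {w x y : V} (h : Avoid H w x y) : x ≠ w := by
  obtain ⟨p, hp⟩ := h
  intro he; exact hp (he ▸ p.start_mem_support)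

lemma Avoid.ne_snd {H : SimpleGraph V} {w x y : V} (h : Avoid H w x y) : y ≠ w := by
  obtain ⟨p, hp⟩ := h
  intro he; exact hp (he ▸ p.end_mem_support)

lemma Avoid.refl {H : SimpleGraph V} {w x : V} (h : x ≠ w) : Avoid H w x x :=
  ⟨SimpleGraph.Walk.nil, by simp [Ne.symm h]⟩

lemma Avoid.symm {H : SimpleGraph V} {w x y : V} (h : Avoid H w x y) : Avoid H w y x := by
  obtain ⟨p, hp⟩ := h
  exact ⟨p.reverse, by simpa using hp⟩

lemma Avoid.trans {H : SimpleGraph V} {w x y z : V} (h1 : Avoid H w x y) (h2 : Avoid H w y z) :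
    Avoid H w x z := by
  obtain ⟨p, hp⟩ := h1; obtain ⟨q, hq⟩ := h2
  refine ⟨p.append q, ?_⟩
  rw [SimpleGraph.Walk.mem_support_append_iff]
  tauto

lemma Avoid.adj {H : SimpleGraph V} {w x y : V} (h : H.Adj x y) (hx : x ≠ w) (hy : y ≠ w) :
    Avoid H w x y :=
  ⟨h.toWalk, by simp [Ne.symm hx, Ne.symm hy]⟩

lemma avoid_mono {H H' : SimpleGraph V} (hle : H ≤ H') {w x y : V} (h : Avoid H w x y) :
    Avoid H' w x y := by
  obtain ⟨p, hp⟩ := h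
  exact ⟨p.transfer H' (fun e he => SimpleGraph.edgeSet_mono hle (p.edges_subset_edgeSet he)),
    by rwa [SimpleGraph.Walk.support_transfer]⟩

lemma coe_reachable_aux {H : SimpleGraph V} {w : V} :
    ∀ {x y : V} (p : H.Walk x y) (hp : w ∉ p.support)
      (hx : x ∈ ((⊤ : H.Subgraph).deleteVerts {w}).verts)
      (hy : y ∈ ((⊤ : H.Subgraph).deleteVerts {w}).verts),
      ((⊤ : H.Subgraph).deleteVerts {w}).coe.Reachable ⟨x, hx⟩ ⟨y, hy⟩ := by
  intro x y p
  induction p with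
  | nil => intro _ hx hy; rfl
  | @cons a b c hab q ih =>
      intro hp hx hy
      rw [SimpleGraph.Walk.support_cons, List.mem_cons] at hp
      push_neg at hp
      have hb : b ∈ ((⊤ : H.Subgraph).deleteVerts {w}).verts := by
        simp only [SimpleGraph.Subgraph.deleteVerts_verts, SimpleGraph.Subgraph.verts_top,
          Set.mem_diff, Set.mem_univ, Set.mem_singleton_iff, true_and]
        intro he
        exact hp.2 (he ▸ q.start_mem_support)
      refine Reachable.trans (Adj.reachable ?_) (ih hp.2 hb hy)
      have ha : a ≠ w := fun he => hp.1 he.symm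
      have hbw : b ≠ w := by
        intro he; exact hp.2 (he ▸ q.start_mem_support)
      simp [SimpleGraph.Subgraph.deleteVerts_adj, ha, hbw, hab]

/-- Reachability in the vertex-deleted subtype graph from an avoiding walk. -/
lemma coe_reachable_of_avoid {H : SimpleGraph V} {w x y : V} (hx : x ≠ w) (hy : y ≠ w)
    (h : Avoid H w x y) :
    ((⊤ : H.Subgraph).deleteVerts {w}).coe.Reachable
      ⟨x, by simp [hx]⟩ ⟨y, by simp [hy]⟩ := by
  obtain ⟨p, hp⟩ := h
  exact coe_reachable_aux p hp _ _

/-- From 2-connectivity, avoiding walks exist. -/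
lemma avoid_of_twoConnected {G : SimpleGraph V} (hG : TwoConnected G) {w x y : V}
    (hx : x ≠ w) (hy : y ≠ w) : Avoid G w x y := by
  have h := (hG.2 w).preconnected ⟨x, by simp [hx]⟩ ⟨y, by simp [hy]⟩
  obtain ⟨p⟩ := h
  refine ⟨p.map (SimpleGraph.Subgraph.hom _), ?_⟩
  show w ∉ (p.map (SimpleGraph.Subgraph.hom _)).support
  rw [SimpleGraph.Walk.support_map]
  intro hmem
  obtain ⟨⟨t, ht⟩, -, h2⟩ := List.mem_map.mp hmem
  simp only [SimpleGraph.Subgraph.deleteVerts_verts, SimpleGraph.Subgraph.verts_top,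
    Set.mem_diff, Set.mem_univ, Set.mem_singleton_iff, true_and] at ht
  exact ht h2

lemma twoConnected_of_avoid {G : SimpleGraph V} (hcard : 3 ≤ Nat.card V)
    (h : ∀ w x y : V, x ≠ w → y ≠ w → Avoid G w x y) : TwoConnected G := by
  refine ⟨hcard, fun w => ?_⟩
  have : 1 < Fintype.card V := by
    have := Nat.card_eq_fintype_card (α := V) ▸ hcard; omega
  obtain ⟨z, hz⟩ := Fintype.exists_ne_of_one_lt_card this w
  rw [SimpleGraph.connected_iff]
  constructor
  · rintro ⟨x, hx⟩ ⟨y, hy⟩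
    simp only [SimpleGraph.Subgraph.deleteVerts_verts, SimpleGraph.Subgraph.verts_top,
      Set.mem_diff, Set.mem_univ, Set.mem_singleton_iff, true_and] at hx hy
    obtain ⟨p, hp⟩ := h w x y hx hy
    exact coe_reachable_aux p hp _ _
  · exact ⟨⟨z, by simp [hz]⟩⟩

lemma exists_sep_of_not_twoConnected {H : SimpleGraph V} (hcard : 3 ≤ Nat.card V)
    (h : ¬ TwoConnected H) : ∃ w x y : V, x ≠ w ∧ y ≠ w ∧ ¬ Avoid H w x y := by
  by_contra hcon
  push_neg at hcon
  exact h (twoConnected_of_avoid hcard (fun w x y hx hy => hcon w x y hx hy))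


/-! ### Layer 2: witnesses and sides -/

variable {G : SimpleGraph V}

/-- `w` is a cut vertex separating `a` from `b` after deleting the edge `s(a,b)`. -/
def Wit (G : SimpleGraph V) (a b w : V) : Prop :=
  w ≠ a ∧ w ≠ b ∧ ¬ Avoid (G.deleteEdges {s(a,b)}) w a b

/-- The `a`-side of the separation. -/
def Side (G : SimpleGraph V) (a b w : V) : Set V :=
  {t | Avoid (G.deleteEdges {s(a,b)}) w a t}

lemma reroute {H : SimpleGraph V} {f : Sym2 V} {r s w : V} (hf : f = s(r,s))
    (ρ : (H.deleteEdges {f}).Walk r s) (hρ : w ∉ ρ.support) :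
    ∀ {x y : V} (p : H.Walk x y), w ∉ p.support → Avoid (H.deleteEdges {f}) w x y := by
  intro x y p
  induction p with
  | nil => intro hp; exact Avoid.refl (fun he => hp (by simp [he]))
  | @cons u u' y huv q ih =>
      intro hp
      rw [SimpleGraph.Walk.support_cons, List.mem_cons] at hp
      push_neg at hp
      have hu : u ≠ w := fun he => hp.1 he.symm
      have hu' : u' ≠ w := fun he => hp.2 (he ▸ q.start_mem_support)
      refine Avoid.trans ?_ (ih hp.2)
      by_cases he : s(u, u') = f
      · rw [hf, Sym2.eq_iff] at he
        rcases he with ⟨rfl, rfl⟩ | ⟨rfl, rfl⟩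
        · exact ⟨ρ, hρ⟩
        · exact Avoid.symm ⟨ρ, hρ⟩
      · exact Avoid.adj (by simp [SimpleGraph.deleteEdges_adj, huv, he]) hu hu'

lemma avoid_delete_of_avoid {a b w x y : V}
    (hq : Avoid (G.deleteEdges {s(a,b)}) w a b) (h : Avoid G w x y) :
    Avoid (G.deleteEdges {s(a,b)}) w x y := by
  obtain ⟨ρ, hρ⟩ := hq
  obtain ⟨p, hp⟩ := h
  exact reroute rfl ρ hρ p hp

lemma avoid_delete_incident {a b x y : V} (h : Avoid G a x y) :
    Avoid (G.deleteEdges {s(a,b)}) a x y := by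
  obtain ⟨p, hp⟩ := h
  refine ⟨p.toDeleteEdges _ (fun e he => ?_), by
    rwa [SimpleGraph.Walk.toDeleteEdges, SimpleGraph.Walk.support_transfer]⟩
  simp only [Set.mem_singleton_iff]
  rintro rfl
  exact hp (p.fst_mem_support_of_mem_edges he)

lemma avoid_delete_incident' {a b x y : V} (h : Avoid G b x y) :
    Avoid (G.deleteEdges {s(a,b)}) b x y := by
  rw [Sym2.eq_swap]
  exact avoid_delete_incident h

lemma exists_wit (hG : MinTwoConnected G) {a b : V} (hab : s(a,b) ∈ G.edgeSet) :
    ∃ w, Wit G a b w := by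
  have hcard : 3 ≤ Nat.card V := hG.1.1
  obtain ⟨w, x, y, hx, hy, hnav⟩ :=
    exists_sep_of_not_twoConnected hcard (hG.2 _ hab)
  have hwa : w ≠ a := by
    rintro rfl
    exact hnav (avoid_delete_incident (avoid_of_twoConnected hG.1 hx hy))
  have hwb : w ≠ b := by
    rintro rfl
    exact hnav (avoid_delete_incident' (avoid_of_twoConnected hG.1 hx hy))
  refine ⟨w, hwa, hwb, fun hq => ?_⟩
  exact hnav (avoid_delete_of_avoid hq (avoid_of_twoConnected hG.1 hx hy))

lemma Wit.a_mem_side {a b w : V} (h : Wit G a b w) : a ∈ Side G a b w :=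
  Avoid.refl (Ne.symm h.1)

lemma Wit.b_not_mem_side {a b w : V} (h : Wit G a b w) : b ∉ Side G a b w :=
  fun hb => h.2.2 hb

lemma not_mem_side_self {a b w : V} : w ∉ Side G a b w := fun h => h.ne_snd rfl

lemma side_closure {a b w t u : V} (ht : t ∈ Side G a b w)
    (hadj : (G.deleteEdges {s(a,b)}).Adj t u) (hu : u ≠ w) : u ∈ Side G a b w :=
  Avoid.trans ht (Avoid.adj hadj (ht.ne_snd) hu)

lemma sides_disjoint {a b w t : V} (h : Wit G a b w)
    (h1 : t ∈ Side G a b w) (h2 : t ∈ Side G b a w) : False := by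
  have h2' : Avoid (G.deleteEdges {s(a,b)}) w b t := by
    have := h2
    rwa [Side, Sym2.eq_swap] at this
  exact h.2.2 (Avoid.trans h1 (Avoid.symm h2'))

lemma closure_walk {H : SimpleGraph V} {S T : Set V}
    (hS : ∀ u v', u ∈ S → u ∉ T → H.Adj u v' → v' ∉ T → v' ∈ S) :
    ∀ {x y : V} (p : H.Walk x y), x ∈ S → (∀ t ∈ p.support, t ∉ T) →
      ∀ t ∈ p.support, t ∈ S := by
  intro x y p
  induction p with
  | nil =>
      intro hx _ t ht
      rw [SimpleGraph.Walk.support_nil, List.mem_singleton] at ht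
      exact ht ▸ hx
  | @cons u u' y huv q ih =>
      intro hx hT t ht
      rw [SimpleGraph.Walk.support_cons, List.mem_cons] at ht
      have hu' : u' ∈ S := by
        refine hS u u' hx (hT u (by simp)) huv (hT u' (by simp)) 
      rcases ht with rfl | ht
      · exact hx
      · exact ih hu' (fun s hs => hT s (by simp [hs])) t ht

lemma not_mem_takeUntil_of_ne [DecidableEq V] {H : SimpleGraph V} {x y : V} {p : H.Walk x y}
    (hnd : p.support.Nodup) {s : V} (hs : s ∈ p.support) (hne : s ≠ y) :
    y ∉ (p.takeUntil s hs).support := by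
  have hspec := SimpleGraph.Walk.take_spec p hs
  have hsupp : p.support = (p.takeUntil s hs).support ++ (p.dropUntil s hs).support.tail := by
    conv_lhs => rw [← hspec]
    rw [SimpleGraph.Walk.support_append]
  rw [hsupp] at hnd
  have hdisj := List.disjoint_of_nodup_append hnd
  intro hmem
  refine hdisj hmem ?_
  have hyd : y ∈ (p.dropUntil s hs).support := SimpleGraph.Walk.end_mem_support _
  have : (p.dropUntil s hs).support = s :: (p.dropUntil s hs).support.tail :=
    SimpleGraph.Walk.support_eq_cons _
  rw [this, List.mem_cons] at hyd
  rcases hyd with h | h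
  · exact absurd h.symm hne
  · exact h




/-! ### Layer 3: cycle gadgets -/

lemma walk_start_edge {H : SimpleGraph V} {x y u : V} (p : H.Walk x y)
    (hnd : p.support.Nodup) (h : s(x,u) ∈ p.edges) :
    ∃ (hadj : H.Adj x u) (t : H.Walk u y), p = SimpleGraph.Walk.cons hadj t := by
  cases p with
  | nil => simp at h
  | @cons _ z _ hadj' t' =>
      rw [SimpleGraph.Walk.edges_cons, List.mem_cons] at h
      rcases h with h | h
      · rw [Sym2.eq_iff] at h
        rcases h with ⟨-, rfl⟩ | ⟨h1', h2'⟩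
        · exact ⟨hadj', t', rfl⟩
        · exact absurd (h1' ▸ hadj') (H.irrefl)
      · exfalso
        have := SimpleGraph.Walk.fst_mem_support_of_mem_edges t' h
        rw [SimpleGraph.Walk.support_cons] at hnd
        exact (List.nodup_cons.mp hnd).1 this

lemma mem_tail_of_closed {H : SimpleGraph V} {v : V} {c : H.Walk v v} (hnil : ¬c.Nil)
    {x : V} : x ∈ c.support ↔ x ∈ c.support.tail := by
  have hv : v ∈ c.support.tail := by
    cases c with
    | nil => simp at hnil
    | cons h q =>
        rw [SimpleGraph.Walk.support_cons, List.tail_cons]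
        exact q.end_mem_support
  constructor
  · intro hx
    rw [SimpleGraph.Walk.support_eq_cons c, List.mem_cons] at hx
    rcases hx with rfl | hx
    · exact hv
    · exact hx
  · intro hx
    rw [SimpleGraph.Walk.support_eq_cons c, List.mem_cons]
    exact Or.inr hx

lemma mem_support_rotate [DecidableEq V] {H : SimpleGraph V} {v u : V} {c : H.Walk v v}
    (hnil : ¬c.Nil) (h : u ∈ c.support) {x : V} :
    x ∈ (c.rotate _ h).support ↔ x ∈ c.support := by
  have hrot := SimpleGraph.Walk.support_rotate c _ h
  have h1 : x ∈ (c.rotate _ h).support ↔ x = u ∨ x ∈ (c.rotate _ h).support.tail := by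
    conv_lhs => rw [SimpleGraph.Walk.support_eq_cons (c.rotate _ h)]
    exact List.mem_cons
  have h2 : x ∈ (c.rotate _ h).support.tail ↔ x ∈ c.support.tail := hrot.mem_iff
  rw [h1, h2, ← mem_tail_of_closed hnil]
  constructor
  · rintro (rfl | hx)
    · exact h
    · exact hx
  · intro hx
    exact Or.inr hx

/-- Extract a path from `a` to `b` from a cycle through `s(a,b)`, avoiding that edge. -/
lemma peel [DecidableEq V] {v : V} {c : G.Walk v v} (hc : c.IsCycle) {a b : V}
    (hab : s(a,b) ∈ c.edges) :
    ∃ p : G.Walk a b, p.support.Nodup ∧ (∀ x ∈ p.support, x ∈ c.support) ∧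
      (∀ e ∈ p.edges, e ∈ c.edges) ∧ s(a,b) ∉ p.edges := by
  have ha : a ∈ c.support := SimpleGraph.Walk.fst_mem_support_of_mem_edges c hab
  have hnil : ¬c.Nil := hc.not_nil
  have hc' : (c.rotate _ ha).IsCycle := hc.rotate ha
  have hmemsup : ∀ x, x ∈ (c.rotate _ ha).support → x ∈ c.support := by
    intro x hx
    exact (mem_support_rotate hnil ha).mp hx
  have hmemedge : ∀ e, e ∈ (c.rotate _ ha).edges ↔ e ∈ c.edges :=
    fun e => (SimpleGraph.Walk.rotate_edges c _ ha).mem_iff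
  have hab' : s(a,b) ∈ (c.rotate _ ha).edges := (hmemedge _).mpr hab
  have hadjab : G.Adj a b := c.adj_of_mem_edges hab
  cases hq : c.rotate _ ha with
  | nil => exact absurd (hq ▸ hc') (SimpleGraph.Walk.IsCycle.not_of_nil)
  | @cons _ z _ h1 q =>
      rw [hq] at hc' hab'
      rw [hq] at hmemsup hmemedge
      have hndq : q.support.Nodup := by
        have := hc'.support_nodup
        rwa [SimpleGraph.Walk.support_cons, List.tail_cons] at this
      have htrail : (SimpleGraph.Walk.cons h1 q).edges.Nodup :=
        hc'.isCircuit.isTrail.edges_nodup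
      rw [SimpleGraph.Walk.edges_cons, List.nodup_cons] at htrail
      rw [SimpleGraph.Walk.edges_cons, List.mem_cons] at hab'
      by_cases heq : s(a,b) = s(a,z)
      · have hbz : b = z := by
          rw [Sym2.eq_iff] at heq
          rcases heq with ⟨-, h⟩ | ⟨h1', h2'⟩
          · exact h
          · exact absurd (h1' ▸ h1) (G.irrefl)
        subst hbz
        refine ⟨q.reverse, by simpa using hndq, ?_, ?_, ?_⟩
        · intro x hx
          rw [SimpleGraph.Walk.support_reverse, List.mem_reverse] at hx
          exact hmemsup x (by rw [SimpleGraph.Walk.support_cons]; exact List.mem_cons_of_mem _ hx)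
        · intro e he
          rw [SimpleGraph.Walk.edges_reverse, List.mem_reverse] at he
          exact (hmemedge e).mp (by rw [SimpleGraph.Walk.edges_cons]; exact List.mem_cons_of_mem _ he)
        · rw [SimpleGraph.Walk.edges_reverse, List.mem_reverse]
          intro hmem
          exact htrail.1 (heq ▸ hmem)
      · have habq : s(a,b) ∈ q.edges := by
          rcases hab' with h | h
          · exact absurd h heq
          · exact h
        have habr : s(a,b) ∈ q.reverse.edges := by
          rwa [SimpleGraph.Walk.edges_reverse, List.mem_reverse]
        have hndr : q.reverse.support.Nodup := by simpa using hndq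
        obtain ⟨hadj2, t, ht⟩ := walk_start_edge q.reverse hndr habr
        have hta : a ∉ t.support := by
          have h' := hndr
          rw [ht, SimpleGraph.Walk.support_cons, List.nodup_cons] at h'
          exact h'.1
        have hndt : t.support.Nodup := by
          have h' := hndr
          rw [ht, SimpleGraph.Walk.support_cons, List.nodup_cons] at h'
          exact h'.2
        have htedges : ∀ e ∈ t.edges, e ∈ q.edges := by
          intro e he
          have h' : e ∈ q.reverse.edges := by
            rw [ht, SimpleGraph.Walk.edges_cons]; exact List.mem_cons_of_mem _ he
          rwa [SimpleGraph.Walk.edges_reverse, List.mem_reverse] at h'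
        have htsupp : ∀ x ∈ t.support, x ∈ q.support := by
          intro x hx
          have h' : x ∈ q.reverse.support := by
            rw [ht, SimpleGraph.Walk.support_cons]; exact List.mem_cons_of_mem _ hx
          rwa [SimpleGraph.Walk.support_reverse, List.mem_reverse] at h'
        have habnt : s(a,b) ∉ t.edges := by
          have h' : q.reverse.edges.Nodup := by simpa using htrail.2
          rw [ht, SimpleGraph.Walk.edges_cons, List.nodup_cons] at h'
          exact h'.1
        refine ⟨SimpleGraph.Walk.cons h1 t.reverse, ?_, ?_, ?_, ?_⟩
        · rw [SimpleGraph.Walk.support_cons, List.nodup_cons,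
            SimpleGraph.Walk.support_reverse]
          exact ⟨by simpa using hta, by simpa using hndt⟩
        · intro x hx
          rw [SimpleGraph.Walk.support_cons, List.mem_cons] at hx
          rcases hx with rfl | hx
          · exact ha
          · rw [SimpleGraph.Walk.support_reverse, List.mem_reverse] at hx
            exact hmemsup x (by
              rw [SimpleGraph.Walk.support_cons]
              exact List.mem_cons_of_mem _ (htsupp x hx))
        · intro e he
          rw [SimpleGraph.Walk.edges_cons, List.mem_cons] at he
          rcases he with rfl | he
          · exact (hmemedge _).mp (by rw [SimpleGraph.Walk.edges_cons]; exact List.mem_cons_self)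
          · rw [SimpleGraph.Walk.edges_reverse, List.mem_reverse] at he
            exact (hmemedge e).mp (by
              rw [SimpleGraph.Walk.edges_cons]
              exact List.mem_cons_of_mem _ (htedges e he))
        · rw [SimpleGraph.Walk.edges_cons, List.mem_cons]
          push_neg
          refine ⟨heq, ?_⟩
          rw [SimpleGraph.Walk.edges_reverse, List.mem_reverse]
          exact habnt

/-- Every vertex on a cycle is incident to two distinct cycle edges. -/
lemma two_nbrs [DecidableEq V] {v : V} {c : G.Walk v v} (hc : c.IsCycle) {d : V}
    (hd : d ∈ c.support) :
    ∃ z₁ z₂ : V, z₁ ≠ z₂ ∧ s(d,z₁) ∈ c.edges ∧ s(d,z₂) ∈ c.edges := by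
  have hc' : (c.rotate _ hd).IsCycle := hc.rotate hd
  have hmemedge : ∀ e, e ∈ (c.rotate _ hd).edges ↔ e ∈ c.edges :=
    fun e => (SimpleGraph.Walk.rotate_edges c _ hd).mem_iff
  cases hq : c.rotate _ hd with
  | nil => exact absurd (hq ▸ hc') (SimpleGraph.Walk.IsCycle.not_of_nil)
  | @cons _ z₁ _ h1 q =>
      rw [hq] at hc'
      rw [hq] at hmemedge
      have hndq : q.support.Nodup := by
        have := hc'.support_nodup
        rwa [SimpleGraph.Walk.support_cons, List.tail_cons] at this
      have htrail : (SimpleGraph.Walk.cons h1 q).edges.Nodup :=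
        hc'.isCircuit.isTrail.edges_nodup
      rw [SimpleGraph.Walk.edges_cons, List.nodup_cons] at htrail
      have hndr : q.reverse.support.Nodup := by simpa using hndq
      -- q.reverse : Walk d z₁, get its first edge
      obtain ⟨z₂, hz₂, hrest⟩ : ∃ (z₂ : V) (h : G.Adj d z₂), ∃ t : G.Walk z₂ z₁,
          q.reverse = SimpleGraph.Walk.cons h t := by
        cases hqr : q.reverse with
        | nil => exact absurd h1 (G.irrefl)
        | @cons _ w _ hh tt => exact ⟨w, hh, tt, rfl⟩
      obtain ⟨t, ht⟩ := hrest
      have hedge2 : s(d,z₂) ∈ q.edges := by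
        have : s(d,z₂) ∈ q.reverse.edges := by
          rw [ht, SimpleGraph.Walk.edges_cons]; exact List.mem_cons_self
        rwa [SimpleGraph.Walk.edges_reverse, List.mem_reverse] at this
      refine ⟨z₁, z₂, ?_, ?_, ?_⟩
      · rintro rfl
        exact htrail.1 hedge2
      · exact (hmemedge _).mp (by
          rw [SimpleGraph.Walk.edges_cons]; exact List.mem_cons_self)
      · exact (hmemedge _).mp (by
          rw [SimpleGraph.Walk.edges_cons]; exact List.mem_cons_of_mem _ hedge2)


lemma drop_nodup [DecidableEq V] {H : SimpleGraph V} {x y r : V} {q : H.Walk x y}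
    (hnd : q.support.Nodup) (hr : r ∈ q.support) : (q.dropUntil r hr).support.Nodup := by
  have hsupp : q.support = (q.takeUntil r hr).support ++ (q.dropUntil r hr).support.tail := by
    conv_lhs => rw [← SimpleGraph.Walk.take_spec q hr]
    rw [SimpleGraph.Walk.support_append]
  rw [hsupp] at hnd
  have hdisj := List.disjoint_of_nodup_append hnd
  have htail : (q.dropUntil r hr).support.tail.Nodup := (List.nodup_append.mp hnd).2.1
  have hrend : r ∈ (q.takeUntil r hr).support := SimpleGraph.Walk.end_mem_support _
  have hrnot : r ∉ (q.dropUntil r hr).support.tail := fun hmem => hdisj hrend hmem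
  rw [SimpleGraph.Walk.support_eq_cons (q.dropUntil r hr)]
  exact List.nodup_cons.mpr ⟨hrnot, htail⟩

lemma subwalk_between [DecidableEq V] {H : SimpleGraph V} {x y r s : V} (q : H.Walk x y)
    (hnd : q.support.Nodup) (hr : r ∈ q.support) (hs : s ∈ q.support)
    (hry : r ≠ y) (hsy : s ≠ y) :
    ∃ μ : H.Walk r s, (∀ e ∈ μ.edges, e ∈ q.edges) ∧ y ∉ μ.support := by
  by_cases hmem : s ∈ (q.dropUntil r hr).support
  · refine ⟨(q.dropUntil r hr).takeUntil s hmem, ?_, ?_⟩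
    · intro e he
      exact SimpleGraph.Walk.edges_dropUntil_subset q hr
        (SimpleGraph.Walk.edges_takeUntil_subset _ hmem he)
    · exact not_mem_takeUntil_of_ne (drop_nodup hnd hr) hmem hsy
  · have hsk : s ∈ (q.takeUntil r hr).support := by
      have hsupp : q.support = (q.takeUntil r hr).support ++ (q.dropUntil r hr).support.tail := by
        conv_lhs => rw [← SimpleGraph.Walk.take_spec q hr]
        rw [SimpleGraph.Walk.support_append]
      rw [hsupp, List.mem_append] at hs
      rcases hs with hs | hs
      · exact hs
      · exact absurd (List.mem_of_mem_tail hs) hmem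
    refine ⟨((q.takeUntil r hr).dropUntil s hsk).reverse, ?_, ?_⟩
    · intro e he
      rw [SimpleGraph.Walk.edges_reverse, List.mem_reverse] at he
      exact SimpleGraph.Walk.edges_takeUntil_subset q hr
        (SimpleGraph.Walk.edges_dropUntil_subset _ hsk he)
    · rw [SimpleGraph.Walk.support_reverse, List.mem_reverse]
      intro hmem2
      have : y ∈ (q.takeUntil r hr).support :=
        SimpleGraph.Walk.support_dropUntil_subset _ hsk hmem2
      exact not_mem_takeUntil_of_ne hnd hr hry this

lemma detour_in_cycle [DecidableEq V] {v : V} {K : G.Walk v v} (hK : K.IsCycle)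
    {r s w : V} (hr : r ∈ K.support) (hs : s ∈ K.support)
    (hwr : w ≠ r) (hws : w ≠ s) (hrs : r ≠ s) :
    ∃ μ : G.Walk r s, (∀ e ∈ μ.edges, e ∈ K.edges) ∧ w ∉ μ.support := by
  have hnil : ¬K.Nil := hK.not_nil
  by_cases hw : w ∈ K.support
  · have hK' : (K.rotate _ hw).IsCycle := hK.rotate hw
    have hmemedge : ∀ e, e ∈ (K.rotate _ hw).edges ↔ e ∈ K.edges :=
      fun e => (SimpleGraph.Walk.rotate_edges K _ hw).mem_iff
    have hr' : r ∈ (K.rotate _ hw).support := (mem_support_rotate hnil hw).mpr hr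
    have hs' : s ∈ (K.rotate _ hw).support := (mem_support_rotate hnil hw).mpr hs
    cases hq : K.rotate _ hw with
    | nil => exact absurd (hq ▸ hK') (SimpleGraph.Walk.IsCycle.not_of_nil)
    | @cons _ z _ h1 q =>
        rw [hq] at hK' hmemedge hr' hs'
        have hndq : q.support.Nodup := by
          have := hK'.support_nodup
          rwa [SimpleGraph.Walk.support_cons, List.tail_cons] at this
        have hrq : r ∈ q.support := by
          rw [SimpleGraph.Walk.support_cons, List.mem_cons] at hr'
          rcases hr' with h | h
          · exact absurd h.symm hwr
          · exact h
        have hsq : s ∈ q.support := by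
          rw [SimpleGraph.Walk.support_cons, List.mem_cons] at hs'
          rcases hs' with h | h
          · exact absurd h.symm hws
          · exact h
        obtain ⟨μ, hμe, hμs⟩ := subwalk_between q hndq hrq hsq
          (fun h => hwr h.symm) (fun h => hws h.symm)
        refine ⟨μ, fun e he => (hmemedge e).mp ?_, hμs⟩
        rw [SimpleGraph.Walk.edges_cons]
        exact List.mem_cons_of_mem _ (hμe e he)
  · have hK'' : (K.rotate _ hr).IsCycle := hK.rotate hr
    have hmemedge : ∀ e, e ∈ (K.rotate _ hr).edges ↔ e ∈ K.edges :=
      fun e => (SimpleGraph.Walk.rotate_edges K _ hr).mem_iff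
    have hs' : s ∈ (K.rotate _ hr).support := (mem_support_rotate hnil hr).mpr hs
    cases hq : K.rotate _ hr with
    | nil => exact absurd (hq ▸ hK'') (SimpleGraph.Walk.IsCycle.not_of_nil)
    | @cons _ z _ h1 q =>
        rw [hq] at hK'' hmemedge hs'
        have hsq : s ∈ q.support := by
          rw [SimpleGraph.Walk.support_cons, List.mem_cons] at hs'
          rcases hs' with h | h
          · exact absurd h hrs.symm
          · exact h
        refine ⟨(q.dropUntil s hsq).reverse, ?_, ?_⟩
        · intro e he
          rw [SimpleGraph.Walk.edges_reverse, List.mem_reverse] at he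
          refine (hmemedge e).mp ?_
          rw [SimpleGraph.Walk.edges_cons]
          exact List.mem_cons_of_mem _ (SimpleGraph.Walk.edges_dropUntil_subset _ hsq he)
        · rw [SimpleGraph.Walk.support_reverse, List.mem_reverse]
          intro hmem
          have h2 : w ∈ q.support := SimpleGraph.Walk.support_dropUntil_subset _ hsq hmem
          have h3 : w ∈ (K.rotate _ hr).support := by
            rw [hq, SimpleGraph.Walk.support_cons]
            exact List.mem_cons_of_mem _ h2
          exact hw ((mem_support_rotate hnil hr).mp h3)

/-- No cycle of a minimally 2-connected graph has a chord. -/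
lemma no_chord [DecidableEq V] (hG : MinTwoConnected G) {z : V} {K : G.Walk z z}
    (hK : K.IsCycle) {r s : V} (hadj : G.Adj r s)
    (hr : r ∈ K.support) (hs : s ∈ K.support) (hne : s(r,s) ∉ K.edges) : False := by
  refine hG.2 s(r,s) (G.mem_edgeSet.mpr hadj) (twoConnected_of_avoid hG.1.1 ?_)
  intro w x y hx hy
  have hG2 : Avoid G w x y := avoid_of_twoConnected hG.1 hx hy
  by_cases hwr : w = r
  · subst hwr
    exact avoid_delete_incident hG2
  by_cases hws : w = s
  · subst hws
    exact avoid_delete_incident' hG2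
  obtain ⟨μ, hμe, hμs⟩ := detour_in_cycle hK hr hs hwr hws hadj.ne
  have hμd : ∀ e ∈ μ.edges, e ∉ ({s(r,s)} : Set (Sym2 V)) := by
    intro e he hmem
    rw [Set.mem_singleton_iff] at hmem
    exact hne (hmem ▸ hμe e he)
  obtain ⟨p, hp⟩ := hG2
  exact reroute rfl (μ.toDeleteEdges _ hμd)
    (by rwa [SimpleGraph.Walk.toDeleteEdges, SimpleGraph.Walk.support_transfer]) p hp

/-! ### Layer 4: the two sides of a witness -/

/-- The `b`-side of the separation. -/
def BSide (G : SimpleGraph V) (a b w : V) : Set V :=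
  {t | Avoid (G.deleteEdges {s(a,b)}) w b t}

lemma bside_closure {a b w t u : V} (ht : t ∈ BSide G a b w)
    (hadj : (G.deleteEdges {s(a,b)}).Adj t u) (hu : u ≠ w) : u ∈ BSide G a b w :=
  Avoid.trans ht (Avoid.adj hadj (ht.ne_snd) hu)

lemma Wit.b_mem_bside {a b w : V} (h : Wit G a b w) : b ∈ BSide G a b w :=
  Avoid.refl (Ne.symm h.2.1)

lemma side_bside_disjoint {a b w t : V} (h : Wit G a b w)
    (h1 : t ∈ Side G a b w) (h2 : t ∈ BSide G a b w) : False :=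
  h.2.2 (Avoid.trans h1 (Avoid.symm h2))

lemma walk_in_side {a b w : V} {x y : V} (hx : x ∈ Side G a b w)
    (p : (G.deleteEdges {s(a,b)}).Walk x y) (hw : w ∉ p.support) :
    ∀ t ∈ p.support, t ∈ Side G a b w := by
  refine closure_walk (T := {w}) ?_ p hx ?_
  · intro u v' hu _ hadj hv'
    exact side_closure hu hadj (by simpa using hv')
  · intro t ht hmem
    rw [Set.mem_singleton_iff] at hmem
    exact hw (hmem ▸ ht)

lemma walk_in_bside {a b w : V} {x y : V} (hx : x ∈ BSide G a b w)
    (p : (G.deleteEdges {s(a,b)}).Walk x y) (hw : w ∉ p.support) :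
    ∀ t ∈ p.support, t ∈ BSide G a b w := by
  refine closure_walk (T := {w}) ?_ p hx ?_
  · intro u v' hu _ hadj hv'
    exact bside_closure hu hadj (by simpa using hv')
  · intro t ht hmem
    rw [Set.mem_singleton_iff] at hmem
    exact hw (hmem ▸ ht)

/-- The witness has a neighbour on the `b`-side. -/
lemma exists_bside_nbr {a b w : V} (hw : Wit G a b w)
    (π : (G.deleteEdges {s(a,b)}).Walk a b) :
    ∃ y₀, y₀ ∈ BSide G a b w ∧ (G.deleteEdges {s(a,b)}).Adj w y₀ := by
  classical
  set pihat : (G.deleteEdges {s(a,b)}).Walk a b := (π.toPath : (G.deleteEdges {s(a,b)}).Walk a b)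
    with hpihat
  have hnd : pihat.support.Nodup := (π.toPath).2.support_nodup
  have hwmem : w ∈ pihat.support := by
    by_contra hwm
    exact hw.2.2 ⟨pihat, hwm⟩
  have hdnd : (pihat.dropUntil w hwmem).support.Nodup := drop_nodup hnd hwmem
  cases hd : pihat.dropUntil w hwmem with
  | nil => exact absurd rfl hw.2.1
  | @cons _ y₀ _ hadj₀ t =>
      have hwt : w ∉ t.support := by
        rw [hd, SimpleGraph.Walk.support_cons, List.nodup_cons] at hdnd
        exact hdnd.1
      refine ⟨y₀, ?_, hadj₀⟩
      exact ⟨t.reverse, by simpa using hwt⟩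

/-- The witness has a neighbour on the `a`-side. -/
lemma exists_side_nbr (hG : MinTwoConnected G) {a b w : V} (hadj : G.Adj a b)
    (hw : Wit G a b w) :
    ∃ z, z ∈ Side G a b w ∧ (G.deleteEdges {s(a,b)}).Adj w z := by
  classical
  obtain ⟨p, hp⟩ := avoid_of_twoConnected hG.1 (G.ne_of_adj hadj) hw.2.1 (x := a) (y := w)
  have hpd : ∀ e ∈ p.edges, e ∉ ({s(a,b)} : Set (Sym2 V)) := by
    intro e he hmem
    rw [Set.mem_singleton_iff] at hmem
    subst hmem
    exact hp (p.snd_mem_support_of_mem_edges he)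
  set p' : (G.deleteEdges {s(a,b)}).Walk a w := p.toDeleteEdges _ hpd with hp'def
  set phat : (G.deleteEdges {s(a,b)}).Walk a w := (p'.toPath : (G.deleteEdges {s(a,b)}).Walk a w)
  have hnd : phat.support.Nodup := (p'.toPath).2.support_nodup
  have hndr : phat.reverse.support.Nodup := by simpa using hnd
  cases hd : phat.reverse with
  | nil => exact absurd rfl (Ne.symm hw.1)
  | @cons _ z _ hadj₀ t =>
      have hwt : w ∉ t.support := by
        rw [hd, SimpleGraph.Walk.support_cons, List.nodup_cons] at hndr
        exact hndr.1
      refine ⟨z, ?_, hadj₀⟩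
      exact ⟨t.reverse, by simpa using hwt⟩

/-- No witness lies inside a minimal side. -/
lemma no_wit_in_min_side (hG : MinTwoConnected G) {a b w : V}
    (π : (G.deleteEdges {s(a,b)}).Walk a b) (hw : Wit G a b w)
    (hmin : ∀ w', Wit G a b w' → (Side G a b w).ncard ≤ (Side G a b w').ncard)
    {v : V} (hv : v ∈ Side G a b w) : ¬ Wit G a b v := by
  classical
  intro hwv
  have hvw : v ≠ w := hv.ne_snd
  have hsub : Side G a b v ⊆ Side G a b w := by
    intro t ht
    obtain ⟨p, hp⟩ := ht
    by_cases hwp : w ∈ p.support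
    · exfalso
      -- build an a-b connection avoiding v
      have hA1 : Avoid (G.deleteEdges {s(a,b)}) v a w :=
        ⟨p.takeUntil w hwp, fun hmem => hp (SimpleGraph.Walk.support_takeUntil_subset _ _ hmem)⟩
      obtain ⟨y₀, hy₀, hadj₀⟩ := exists_bside_nbr hw π
      have hy₀v : y₀ ≠ v := by
        rintro rfl
        exact side_bside_disjoint hw hv hy₀
      have hA2 : Avoid (G.deleteEdges {s(a,b)}) v w y₀ :=
        Avoid.adj hadj₀ (Ne.symm hvw) hy₀v
      obtain ⟨pb, hpb⟩ := hy₀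
      have hpbs : ∀ t' ∈ pb.support, t' ∈ BSide G a b w :=
        walk_in_bside hw.b_mem_bside pb hpb
      have hA3 : Avoid (G.deleteEdges {s(a,b)}) v b y₀ := by
        refine ⟨pb, fun hmem => ?_⟩
        exact side_bside_disjoint hw hv (hpbs v hmem)
      exact hwv.2.2 (hA1.trans (hA2.trans hA3.symm))
    · exact walk_in_side hw.a_mem_side p hwp t (SimpleGraph.Walk.end_mem_support p)
  have hvs : v ∉ Side G a b v := not_mem_side_self
  have hss : Side G a b v ⊂ Side G a b w := ⟨hsub, fun hsup => hvs (hsup hv)⟩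
  have := Set.ncard_lt_ncard hss (Set.toFinite _)
  exact absurd (hmin v hwv) (by omega)

/-- With a minimal witness, one can avoid any vertex of the side. -/
lemma side_avoid (hG : MinTwoConnected G) {a b w : V}
    (π : (G.deleteEdges {s(a,b)}).Walk a b) (hadj : G.Adj a b) (hw : Wit G a b w)
    (hmin : ∀ w', Wit G a b w' → (Side G a b w).ncard ≤ (Side G a b w').ncard)
    {v : V} (hv : v ∈ Side G a b w) {x y : V} (hx : x ≠ v) (hy : y ≠ v) :
    Avoid (G.deleteEdges {s(a,b)}) v x y := by
  have hnw : ¬ Wit G a b v := no_wit_in_min_side hG π hw hmin hv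
  rw [Wit] at hnw
  push_neg at hnw
  by_cases hva : v = a
  · subst hva
    exact avoid_delete_incident (avoid_of_twoConnected hG.1 hx hy)
  by_cases hvb : v = b
  · exact absurd hv (by rw [hvb]; exact hw.b_not_mem_side)
  · exact avoid_delete_of_avoid (hnw hva hvb)
      (avoid_of_twoConnected hG.1 hx hy)

/-! ### Layer 5: the end-block graph -/

/-- The induced graph on `Side G a b w ∪ {w}` (inside `G` minus the edge `s(a,b)`). -/
def Bg (G : SimpleGraph V) (a b w : V) : SimpleGraph V where
  Adj x y := (G.deleteEdges {s(a,b)}).Adj x y ∧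
    (x ∈ Side G a b w ∪ {w}) ∧ (y ∈ Side G a b w ∪ {w})
  symm := by
    constructor
    intro x y h
    exact ⟨h.1.symm, h.2.2, h.2.1⟩
  loopless := by
    constructor
    intro x h
    exact (G.deleteEdges {s(a,b)}).irrefl h.1

lemma bg_support_mem {a b w x y : V} (p : (Bg G a b w).Walk x y)
    (hx : x ∈ Side G a b w ∪ {w}) : ∀ t ∈ p.support, t ∈ Side G a b w ∪ {w} := by
  induction p with
  | nil =>
      intro t ht
      rw [SimpleGraph.Walk.support_nil, List.mem_singleton] at ht
      exact ht ▸ hx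
  | @cons u u' y huv q ih =>
      intro t ht
      rw [SimpleGraph.Walk.support_cons, List.mem_cons] at ht
      rcases ht with rfl | ht
      · exact hx
      · exact ih huv.2.2 t ht

lemma bg_le {a b w : V} : Bg G a b w ≤ G.deleteEdges {s(a,b)} := by
  intro x y h
  exact h.1

lemma bg_edges_ne {a b w x y : V} (p : (Bg G a b w).Walk x y) :
    ∀ e ∈ p.edges, e ∈ G.edgeSet ∧ e ≠ s(a,b) := by
  intro e he
  have h := SimpleGraph.edgeSet_mono (bg_le (G := G) (a := a) (b := b) (w := w))
    (p.edges_subset_edgeSet he)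
  rw [SimpleGraph.edgeSet_deleteEdges] at h
  exact ⟨h.1, by simpa using h.2⟩

/-- Lift a `w`-avoiding walk on the side into the block graph. -/
lemma walk_to_bg {a b w x y : V} (hx : x ∈ Side G a b w)
    (p : (G.deleteEdges {s(a,b)}).Walk x y) (hwp : w ∉ p.support) :
    ∃ p' : (Bg G a b w).Walk x y, ∀ t ∈ p'.support, t ∈ p.support := by
  induction p with
  | nil => exact ⟨SimpleGraph.Walk.nil, by simp⟩
  | @cons u u' y huv q ih =>
      rw [SimpleGraph.Walk.support_cons, List.mem_cons] at hwp
      push_neg at hwp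
      have hu' : u' ∈ Side G a b w := by
        refine side_closure hx huv ?_
        intro he
        exact hwp.2 (he ▸ q.start_mem_support)
      obtain ⟨q', hq'⟩ := ih hu' hwp.2
      refine ⟨SimpleGraph.Walk.cons (show (Bg G a b w).Adj u u' from ⟨huv, Set.mem_union_left _ hx, Set.mem_union_left _ hu'⟩) q', ?_⟩
      intro t ht
      rw [SimpleGraph.Walk.support_cons, List.mem_cons] at ht
      rcases ht with rfl | ht
      · simp
      · rw [SimpleGraph.Walk.support_cons]
        exact List.mem_cons_of_mem _ (hq' t ht)

/-- Lift a nodup walk from the side to `w` into the block graph. -/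
lemma walk_to_bg_end {a b w x : V} (hx : x ∈ Side G a b w)
    (p : (G.deleteEdges {s(a,b)}).Walk x w) (hnd : p.support.Nodup) :
    ∃ p' : (Bg G a b w).Walk x w, ∀ t ∈ p'.support, t ∈ p.support := by
  have hndr : p.reverse.support.Nodup := by simpa using hnd
  cases hd : p.reverse with
  | nil => exact absurd rfl (Ne.symm hx.ne_snd)
  | @cons _ z _ hadj₀ t =>
      have hwt : w ∉ t.support := by
        rw [hd, SimpleGraph.Walk.support_cons, List.nodup_cons] at hndr
        exact hndr.1
      have htr : w ∉ t.reverse.support := by simpa using hwt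
      have hz : z ∈ Side G a b w := Avoid.trans hx ⟨t.reverse, htr⟩
      obtain ⟨q', hq'⟩ := walk_to_bg hx t.reverse htr
      refine ⟨q'.append (SimpleGraph.Walk.cons (show (Bg G a b w).Adj z w from ⟨hadj₀.symm, Set.mem_union_left _ hz, Set.mem_union_right _ (Set.mem_singleton w)⟩)
        SimpleGraph.Walk.nil), ?_⟩
      intro u hu
      rw [SimpleGraph.Walk.mem_support_append_iff] at hu
      have hmem : ∀ s' ∈ t.support, s' ∈ p.support := by
        intro s' hs'
        have h2 : s' ∈ p.reverse.support := by
          rw [hd, SimpleGraph.Walk.support_cons]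
          exact List.mem_cons_of_mem _ hs'
        rwa [SimpleGraph.Walk.support_reverse, List.mem_reverse] at h2
      rcases hu with hu | hu
      · have h3 := hq' u hu
        rw [SimpleGraph.Walk.support_reverse, List.mem_reverse] at h3
        exact hmem u h3
      · rw [SimpleGraph.Walk.support_cons, List.mem_cons] at hu
        rcases hu with rfl | hu
        · exact hmem _ t.start_mem_support
        · rw [SimpleGraph.Walk.support_nil, List.mem_singleton] at hu
          exact hu ▸ p.end_mem_support

lemma take_nodup [DecidableEq V] {H : SimpleGraph V} {x y r : V} {q : H.Walk x y}
    (hnd : q.support.Nodup) (hr : r ∈ q.support) : (q.takeUntil r hr).support.Nodup := by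
  have hsupp : q.support = (q.takeUntil r hr).support ++ (q.dropUntil r hr).support.tail := by
    conv_lhs => rw [← SimpleGraph.Walk.take_spec q hr]
    rw [SimpleGraph.Walk.support_append]
  rw [hsupp] at hnd
  exact (List.nodup_append.mp hnd).1

/-- Connectivity of the block graph. -/
lemma bg_conn (hG : MinTwoConnected G) {a b w : V}
    (hadj : G.Adj a b) (hw : Wit G a b w)
    {x y : V} (hx : x ∈ Side G a b w ∪ {w}) (hy : y ∈ Side G a b w ∪ {w}) :
    Nonempty ((Bg G a b w).Walk x y) := by
  classical
  have hside : ∀ {t t' : V}, t ∈ Side G a b w → t' ∈ Side G a b w →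
      Nonempty ((Bg G a b w).Walk t t') := by
    intro t t' ht ht'
    obtain ⟨p1, h1⟩ := ht
    obtain ⟨p2, h2⟩ := ht'
    have hfull : w ∉ (p1.reverse.append p2).support := by
      rw [SimpleGraph.Walk.mem_support_append_iff]
      push_neg
      exact ⟨by simpa using h1, h2⟩
    obtain ⟨p', _⟩ := walk_to_bg ⟨p1, h1⟩ (p1.reverse.append p2) hfull
    exact ⟨p'⟩
  obtain ⟨z, hz, hzadj⟩ := exists_side_nbr hG hadj hw
  have hwz : Nonempty ((Bg G a b w).Walk w z) :=
    ⟨SimpleGraph.Walk.cons ⟨hzadj, Or.inr rfl, Or.inl hz⟩ SimpleGraph.Walk.nil⟩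
  rcases hx with hx | hx
  · rcases hy with hy | hy
    · exact hside hx hy
    · rw [Set.mem_singleton_iff] at hy
      subst hy
      obtain ⟨p1⟩ := hside hx hz
      obtain ⟨p2⟩ := hwz
      exact ⟨p1.append p2.reverse⟩
  · rw [Set.mem_singleton_iff] at hx
    subst hx
    rcases hy with hy | hy
    · obtain ⟨p1⟩ := hwz
      obtain ⟨p2⟩ := hside hz hy
      exact ⟨p1.append p2⟩
    · rw [Set.mem_singleton_iff] at hy
      subst hy
      exact ⟨SimpleGraph.Walk.nil⟩

/-- 2-connectivity of the block graph: avoid any single vertex of it. -/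
lemma bg_avoid (hG : MinTwoConnected G) {a b w : V}
    (π : (G.deleteEdges {s(a,b)}).Walk a b) (hadj : G.Adj a b) (hw : Wit G a b w)
    (hmin : ∀ w', Wit G a b w' → (Side G a b w).ncard ≤ (Side G a b w').ncard)
    {u x y : V} (hx : x ∈ Side G a b w ∪ {w}) (hy : y ∈ Side G a b w ∪ {w})
    (hxu : x ≠ u) (hyu : y ≠ u) :
    ∃ p : (Bg G a b w).Walk x y, u ∉ p.support := by
  classical
  by_cases huw : u = w
  · have hxs : x ∈ Side G a b w := by
      rcases hx with h | h
      · exact h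
      · rw [Set.mem_singleton_iff] at h
        exact absurd (h.trans huw.symm) hxu
    have hys : y ∈ Side G a b w := by
      rcases hy with h | h
      · exact h
      · rw [Set.mem_singleton_iff] at h
        exact absurd (h.trans huw.symm) hyu
    obtain ⟨p1, h1⟩ := id hxs
    obtain ⟨p2, h2⟩ := id hys
    have hfull : w ∉ (p1.reverse.append p2).support := by
      rw [SimpleGraph.Walk.mem_support_append_iff]
      push_neg
      exact ⟨by simpa using h1, h2⟩
    obtain ⟨p', hp'⟩ := walk_to_bg hxs (p1.reverse.append p2) hfull
    refine ⟨p', fun hmem => ?_⟩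
    rw [huw] at hmem
    exact hfull (hp' _ hmem)
  · -- u ≠ w; the only interesting case is u ∈ Side, but we can handle both via side_avoid
    -- if u ∉ Side ∪ {w} then any walk inside the block avoids u; get one via the w-case
    by_cases hus : u ∈ Side G a b w
    · obtain ⟨p0, hp0⟩ := side_avoid hG π hadj hw hmin hus hxu hyu
      set phat : (G.deleteEdges {s(a,b)}).Walk x y :=
        (p0.toPath : (G.deleteEdges {s(a,b)}).Walk x y) with hphat
      have hnd : phat.support.Nodup := (p0.toPath).2.support_nodup
      have hup : u ∉ phat.support := fun hmem =>
        hp0 (SimpleGraph.Walk.support_toPath_subset p0 hmem)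
      by_cases hwp : w ∈ phat.support
      · -- split at w
        have hxw : x ≠ w → x ∈ Side G a b w := by
          intro hxw
          rcases hx with h | h
          · exact h
          · exact absurd h hxw
        have hyw : y ≠ w → y ∈ Side G a b w := by
          intro hyw
          rcases hy with h | h
          · exact h
          · exact absurd h hyw
        have hq1 : ∃ q1 : (Bg G a b w).Walk x w, u ∉ q1.support := by
          by_cases hxw' : x = w
          · subst hxw'
            exact ⟨SimpleGraph.Walk.nil, by simpa using (Ne.symm hxu)⟩
          · have hnd1 : (phat.takeUntil w hwp).support.Nodup := take_nodup hnd hwp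
            obtain ⟨q1, hq1⟩ := walk_to_bg_end (hxw hxw') (phat.takeUntil w hwp) hnd1
            refine ⟨q1, fun hmem => ?_⟩
            exact hup (SimpleGraph.Walk.support_takeUntil_subset _ _ (hq1 _ hmem))
        have hq2 : ∃ q2 : (Bg G a b w).Walk w y, u ∉ q2.support := by
          by_cases hyw' : y = w
          · subst hyw'
            exact ⟨SimpleGraph.Walk.nil, by simpa using (Ne.symm hyu)⟩
          · have hnd2 : (phat.dropUntil w hwp).reverse.support.Nodup := by
              simpa using drop_nodup hnd hwp
            obtain ⟨q2, hq2⟩ := walk_to_bg_end (hyw hyw')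
              ((phat.dropUntil w hwp).reverse) hnd2
            refine ⟨q2.reverse, fun hmem => ?_⟩
            rw [SimpleGraph.Walk.support_reverse, List.mem_reverse] at hmem
            have := hq2 _ hmem
            rw [SimpleGraph.Walk.support_reverse, List.mem_reverse] at this
            exact hup (SimpleGraph.Walk.support_dropUntil_subset _ _ this)
        obtain ⟨q1, h1⟩ := hq1
        obtain ⟨q2, h2⟩ := hq2
        refine ⟨q1.append q2, ?_⟩
        rw [SimpleGraph.Walk.mem_support_append_iff]
        push_neg
        exact ⟨h1, h2⟩
      · -- w not on the walk: x, y ∈ Side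
        have hxs : x ∈ Side G a b w := by
          rcases hx with h | h
          · exact h
          · exact absurd (h ▸ phat.start_mem_support) hwp
        obtain ⟨p', hp'⟩ := walk_to_bg hxs phat hwp
        exact ⟨p', fun hmem => hup (hp' _ hmem)⟩
    · -- u outside the block entirely
      obtain ⟨p'⟩ := bg_conn hG hadj hw hx hy
      refine ⟨p', fun hmem => ?_⟩
      rcases bg_support_mem p' hx u hmem with h | h
      · exact hus h
      · exact huw h

lemma splice_edges {H : SimpleGraph V} {r s : V} (ρ : H.Walk r s)
    (hρ : s(r,s) ∉ ρ.edges) :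
    ∀ {x y : V} (p : H.Walk x y), ∃ p' : H.Walk x y, s(r,s) ∉ p'.edges := by
  intro x y p
  induction p with
  | nil => exact ⟨SimpleGraph.Walk.nil, by simp⟩
  | @cons u u' y huv q ih =>
      obtain ⟨q', hq'⟩ := ih
      by_cases he : s(u, u') = s(r, s)
      · rw [Sym2.eq_iff] at he
        rcases he with ⟨rfl, rfl⟩ | ⟨rfl, rfl⟩
        · refine ⟨ρ.append q', ?_⟩
          rw [SimpleGraph.Walk.edges_append, List.mem_append]
          push_neg
          exact ⟨hρ, hq'⟩
        · refine ⟨ρ.reverse.append q', ?_⟩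
          rw [SimpleGraph.Walk.edges_append, List.mem_append]
          push_neg
          refine ⟨?_, hq'⟩
          rw [SimpleGraph.Walk.edges_reverse, List.mem_reverse]
          exact hρ
      · refine ⟨SimpleGraph.Walk.cons huv q', ?_⟩
        rw [SimpleGraph.Walk.edges_cons, List.mem_cons]
        push_neg
        exact ⟨Ne.symm he, hq'⟩

/-- The block graph minus one of its edges is still connected. -/
lemma bg_del_edge_conn (hG : MinTwoConnected G) {a b w : V}
    (π : (G.deleteEdges {s(a,b)}).Walk a b) (hadj : G.Adj a b) (hw : Wit G a b w)
    (hmin : ∀ w', Wit G a b w' → (Side G a b w).ncard ≤ (Side G a b w').ncard)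
    {r s : V} (hrs : (Bg G a b w).Adj r s)
    {t₀ : V} (ht₀ : t₀ ∈ Side G a b w ∪ {w}) (ht₀r : t₀ ≠ r) (ht₀s : t₀ ≠ s)
    {x y : V} (hx : x ∈ Side G a b w ∪ {w}) (hy : y ∈ Side G a b w ∪ {w}) :
    ∃ p : (Bg G a b w).Walk x y, s(r,s) ∉ p.edges := by
  classical
  -- find a neighbour of s in the block different from r
  obtain ⟨ps, hps⟩ := bg_avoid hG π hadj hw hmin (u := r) hrs.2.2 ht₀ hrs.ne' ht₀r
  obtain ⟨z, hz, hzr⟩ : ∃ z, (Bg G a b w).Adj s z ∧ z ≠ r := by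
    cases hd : ps with
    | nil => exact absurd rfl ht₀s
    | @cons _ z _ hsz t =>
        refine ⟨z, hsz, fun hzr => ?_⟩
        rw [hd, SimpleGraph.Walk.support_cons] at hps
        exact hps (List.mem_cons_of_mem _ (hzr ▸ t.start_mem_support))
  -- detour from r to s not using the edge
  obtain ⟨pr, hpr⟩ := bg_avoid hG π hadj hw hmin (u := s) hrs.2.1 hz.2.2 hrs.ne hz.ne'
  have hpre : s(r,s) ∉ pr.edges := by
    intro hmem
    exact hpr (pr.snd_mem_support_of_mem_edges hmem)
  have hzs : s(z,s) ≠ s(r,s) := by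
    intro h
    rw [Sym2.eq_iff] at h
    rcases h with ⟨h1, -⟩ | ⟨h1, -⟩
    · exact hzr h1
    · exact hz.ne' h1
  set ρ : (Bg G a b w).Walk r s :=
    pr.append (SimpleGraph.Walk.cons hz.symm SimpleGraph.Walk.nil) with hρdef
  have hρ : s(r,s) ∉ ρ.edges := by
    rw [hρdef, SimpleGraph.Walk.edges_append, List.mem_append]
    push_neg
    refine ⟨hpre, ?_⟩
    rw [SimpleGraph.Walk.edges_cons]
    intro hmem
    rw [List.mem_cons] at hmem
    rcases hmem with h | h
    · exact hzs h.symm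
    · simp at h
  obtain ⟨p0⟩ := bg_conn hG hadj hw hx hy
  exact splice_edges ρ hρ p0

/-! ### Layer 6: degree helpers -/

lemma side_extra [DecidableRel G.Adj] (hadj : G.Adj a b) (hw : Wit G a b w)
    (hdeg : 3 ≤ G.degree a) : ∃ t, t ∈ Side G a b w ∧ t ≠ a ∧ t ≠ w := by
  classical
  obtain ⟨t, hat, htb, htw⟩ : ∃ t, G.Adj a t ∧ t ≠ b ∧ t ≠ w := by
    by_contra hno
    push_neg at hno
    have hsub : G.neighborFinset a ⊆ {b, w} := by
      intro t ht
      rw [SimpleGraph.mem_neighborFinset] at ht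
      rcases Classical.em (t = b) with h | h
      · simp [h]
      · have := hno t ht h
        simp [this]
    have hcard := Finset.card_le_card hsub
    have h2 : ({b, w} : Finset V).card ≤ 2 := Finset.card_insert_le _ _ |>.trans (by simp)
    rw [← SimpleGraph.card_neighborFinset_eq_degree] at hdeg
    omega
  have hedge : s(a,t) ≠ s(a,b) := by
    intro h
    rw [Sym2.eq_iff] at h
    rcases h with ⟨-, h⟩ | ⟨h1, -⟩
    · exact htb h
    · exact hadj.ne h1
  have hgd : (G.deleteEdges {s(a,b)}).Adj a t := by
    rw [SimpleGraph.deleteEdges_adj]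
    exact ⟨hat, by simpa using hedge⟩
  exact ⟨t, side_closure hw.a_mem_side hgd htw, fun h => hat.ne' (h ▸ rfl), htw⟩

lemma deg_ge_two [DecidableRel G.Adj] {v d : V} {c : G.Walk v v} (hc : c.IsCycle)
    (hd : d ∈ c.support) : 2 ≤ G.degree d := by
  classical
  obtain ⟨z₁, z₂, hne, h1, h2⟩ := two_nbrs hc hd
  have ha1 : G.Adj d z₁ := c.adj_of_mem_edges h1
  have ha2 : G.Adj d z₂ := c.adj_of_mem_edges h2
  have hsub : ({z₁, z₂} : Finset V) ⊆ G.neighborFinset d := by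
    intro t ht
    rw [Finset.mem_insert, Finset.mem_singleton] at ht
    rw [SimpleGraph.mem_neighborFinset]
    rcases ht with rfl | rfl
    · exact ha1
    · exact ha2
  have hcard := Finset.card_le_card hsub
  rw [Finset.card_insert_of_notMem (by simpa using hne), Finset.card_singleton] at hcard
  rw [← SimpleGraph.card_neighborFinset_eq_degree]
  omega

lemma pi_to_gd {a b : V} (π : G.Walk a b) (hπab : s(a,b) ∉ π.edges) :
    ∃ πd : (G.deleteEdges {s(a,b)}).Walk a b, πd.support = π.support ∧ πd.edges = π.edges := by
  refine ⟨π.transfer _ (fun e he => ?_), SimpleGraph.Walk.support_transfer _ _,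
    SimpleGraph.Walk.edges_transfer _ _⟩
  rw [SimpleGraph.edgeSet_deleteEdges]
  refine ⟨π.edges_subset_edgeSet he, ?_⟩
  simp only [Set.mem_singleton_iff]
  rintro rfl
  exact hπab he

/-- The chord contradiction: if the minimal witness is adjacent to `a`
(after deleting `s(a,b)`), we find a cycle with a chord. -/
lemma chord_contra [DecidableRel G.Adj] (hG : MinTwoConnected G) {v : V} {c : G.Walk v v}
    (hc : c.IsCycle) {a b w : V} (hadj : G.Adj a b) (hw : Wit G a b w)
    (hmin : ∀ w', Wit G a b w' → (Side G a b w).ncard ≤ (Side G a b w').ncard)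
    (hdeg : 3 ≤ G.degree a)
    (π : G.Walk a b) (hπnd : π.support.Nodup) (hπab : s(a,b) ∉ π.edges)
    (hwπ : w ∈ π.support)
    (haw : (G.deleteEdges {s(a,b)}).Adj a w) : False := by
  classical
  obtain ⟨πd, hπds, hπde⟩ := pi_to_gd π hπab
  obtain ⟨t₀, ht₀s, ht₀a, ht₀w⟩ := side_extra hadj hw hdeg
  have hrs : (Bg G a b w).Adj a w := ⟨haw, Or.inl hw.a_mem_side, Or.inr rfl⟩
  obtain ⟨p0, hp0⟩ := bg_del_edge_conn hG πd hadj hw hmin hrs (Or.inl ht₀s) ht₀a ht₀w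
    (Or.inl hw.a_mem_side) (Or.inr rfl)
  set Q : (Bg G a b w).Walk a w := (p0.toPath : (Bg G a b w).Walk a w) with hQdef
  have hQnd : Q.support.Nodup := (p0.toPath).2.support_nodup
  have hQe : s(a,w) ∉ Q.edges := fun h => hp0 (SimpleGraph.Walk.edges_toPath_subset p0 h)
  have hQmem : ∀ t ∈ Q.support, t ∈ Side G a b w ∪ {w} :=
    bg_support_mem Q (Or.inl hw.a_mem_side)
  set QG : G.Walk a w := Q.transfer G (fun e he => (bg_edges_ne Q e he).1) with hQGdef
  have hQGs : QG.support = Q.support := SimpleGraph.Walk.support_transfer _ _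
  have hQGe : QG.edges = Q.edges := SimpleGraph.Walk.edges_transfer _ _
  -- the arc from w to b along π
  set arc : G.Walk w b := π.dropUntil w hwπ with harcdef
  have harcnd : arc.support.Nodup := drop_nodup hπnd hwπ
  have harce : ∀ e ∈ arc.edges, e ∈ π.edges :=
    fun e he => SimpleGraph.Walk.edges_dropUntil_subset _ _ he
  have harcB : ∀ t ∈ arc.support, t ≠ w → t ∈ BSide G a b w := by
    intro t ht htw
    have hrev : t ∈ arc.reverse.support := by simpa using ht
    have harevnd : arc.reverse.support.Nodup := by simpa using harcnd
    have hwnot : w ∉ (arc.reverse.takeUntil t hrev).support :=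
      not_mem_takeUntil_of_ne harevnd hrev htw
    have hsub : ∀ e ∈ (arc.reverse.takeUntil t hrev).edges, e ∈ π.edges := by
      intro e he
      have h1 := SimpleGraph.Walk.edges_takeUntil_subset arc.reverse hrev he
      rw [SimpleGraph.Walk.edges_reverse, List.mem_reverse] at h1
      exact harce e h1
    refine ⟨(arc.reverse.takeUntil t hrev).transfer _ (fun e he => ?_), ?_⟩
    · rw [SimpleGraph.edgeSet_deleteEdges]
      refine ⟨(arc.reverse.takeUntil t hrev).edges_subset_edgeSet he, ?_⟩
      simp only [Set.mem_singleton_iff]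
      rintro rfl
      exact hπab (hsub _ he)
    · rwa [SimpleGraph.Walk.support_transfer]
  have haS : a ∈ Side G a b w := hw.a_mem_side
  have hbw : b ≠ w := Ne.symm hw.2.1
  have haw' : a ≠ w := Ne.symm hw.1
  -- assemble the cycle
  set X : G.Walk w a := arc.append (SimpleGraph.Walk.cons hadj.symm SimpleGraph.Walk.nil)
    with hXdef
  set K : G.Walk a a := QG.append X with hKdef
  -- support bookkeeping
  have hXs : X.support = arc.support ++ [a] := by
    rw [hXdef, SimpleGraph.Walk.support_append]
    simp
  have harcsupp : arc.support = w :: arc.support.tail := SimpleGraph.Walk.support_eq_cons arc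
  have hXt : X.support.tail = arc.support.tail ++ [a] := by
    rw [hXs]
    conv_lhs => rw [harcsupp]
    simp
  have hKs : K.support = QG.support ++ (arc.support.tail ++ [a]) := by
    rw [hKdef, SimpleGraph.Walk.support_append, hXt]
  have hQGsupp : QG.support = a :: QG.support.tail := SimpleGraph.Walk.support_eq_cons QG
  have hKt : K.support.tail = QG.support.tail ++ (arc.support.tail ++ [a]) := by
    rw [hKs]
    conv_lhs => rw [hQGsupp]
    simp
  have hT1mem : ∀ t ∈ QG.support.tail, t ∈ Side G a b w ∪ {w} := by
    intro t ht
    exact hQmem t (by rw [← hQGs]; exact List.mem_of_mem_tail ht)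
  have hT1nd : QG.support.tail.Nodup := by
    have : QG.support.Nodup := by rw [hQGs]; exact hQnd
    rw [hQGsupp] at this
    exact (List.nodup_cons.mp this).2
  have hT1a : a ∉ QG.support.tail := by
    have : QG.support.Nodup := by rw [hQGs]; exact hQnd
    rw [hQGsupp] at this
    exact (List.nodup_cons.mp this).1
  have hT2w : w ∉ arc.support.tail := by
    have := harcnd
    rw [harcsupp] at this
    exact (List.nodup_cons.mp this).1
  have hT2nd : arc.support.tail.Nodup := by
    have := harcnd
    rw [harcsupp] at this
    exact (List.nodup_cons.mp this).2
  have hT2B : ∀ t ∈ arc.support.tail, t ∈ BSide G a b w := by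
    intro t ht
    refine harcB t (List.mem_of_mem_tail ht) ?_
    rintro rfl
    exact hT2w ht
  have hT2a : a ∉ arc.support.tail := by
    intro h
    exact side_bside_disjoint hw haS (hT2B a h)
  -- nodup of the cycle support tail
  have hKtnd : K.support.tail.Nodup := by
    rw [hKt]
    rw [List.nodup_append]
    refine ⟨hT1nd, ?_, ?_⟩
    · rw [List.nodup_append]
      refine ⟨hT2nd, List.nodup_singleton a, ?_⟩
      intro t ht t' ht' htt'
      subst htt'
      rw [List.mem_singleton] at ht'
      exact hT2a (ht' ▸ ht)
    · intro t ht t' ht' htt'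
      subst htt'
      rw [List.mem_append, List.mem_singleton] at ht'
      have hts := hT1mem t ht
      rcases ht' with h2 | rfl
      · have hB := hT2B t h2
        rcases hts with h | h
        · exact side_bside_disjoint hw h hB
        · rw [Set.mem_singleton_iff] at h
          exact hB.ne_snd h
      · exact hT1a ht
  -- trail property
  have hKe : K.edges = QG.edges ++ (arc.edges ++ [s(b,a)]) := by
    rw [hKdef, SimpleGraph.Walk.edges_append, hXdef, SimpleGraph.Walk.edges_append]
    simp
  have hQGmem : ∀ t ∈ QG.support, t ∈ Side G a b w ∪ {w} := by
    intro t ht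
    exact hQmem t (by rwa [← hQGs])
  have hdisjQA : ∀ e, e ∈ QG.edges → e ∈ arc.edges → False := by
    intro e he1 he2
    induction e using Sym2.ind with
    | _ x y =>
        have hx1 := hQGmem x (QG.fst_mem_support_of_mem_edges he1)
        have hy1 := hQGmem y (QG.snd_mem_support_of_mem_edges he1)
        have hx2 := arc.fst_mem_support_of_mem_edges he2
        have hy2 := arc.snd_mem_support_of_mem_edges he2
        have hxy : G.Adj x y := QG.adj_of_mem_edges he1
        have hxw : x = w := by
          by_contra hxw
          have hB := harcB x hx2 hxw
          rcases hx1 with h | h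
          · exact side_bside_disjoint hw h hB
          · exact hxw h
        have hyw : y = w := by
          by_contra hyw
          have hB := harcB y hy2 hyw
          rcases hy1 with h | h
          · exact side_bside_disjoint hw h hB
          · exact hyw h
        exact hxy.ne (hxw.trans hyw.symm)
  have hbaQG : s(b,a) ∉ QG.edges := by
    intro h
    have := hQGmem b (QG.fst_mem_support_of_mem_edges h)
    rcases this with h' | h'
    · exact hw.b_not_mem_side h'
    · exact hbw h'
  have hbaarc : s(b,a) ∉ arc.edges := by
    intro h
    have ha2 := arc.snd_mem_support_of_mem_edges h
    by_cases haw2 : a = w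
    · exact haw' haw2
    · exact side_bside_disjoint hw haS (harcB a ha2 haw2)
  have hKtrail : K.edges.Nodup := by
    rw [hKe, List.nodup_append]
    refine ⟨by rw [hQGe]; exact SimpleGraph.Walk.edges_nodup_of_support_nodup hQnd, ?_, ?_⟩
    · rw [List.nodup_append]
      refine ⟨SimpleGraph.Walk.edges_nodup_of_support_nodup harcnd,
        List.nodup_singleton _, ?_⟩
      intro e he e' he' hee'
      subst hee'
      rw [List.mem_singleton] at he'
      exact hbaarc (he' ▸ he)
    · intro e he e' he' hee'
      subst hee'
      rw [List.mem_append, List.mem_singleton] at he'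
      rcases he' with h2 | rfl
      · exact hdisjQA e he h2
      · exact hbaQG he
  have hbaK : s(b,a) ∈ K.edges := by
    rw [hKe, List.mem_append, List.mem_append]
    exact Or.inr (Or.inr (List.mem_singleton_self _))
  have hKnil : K ≠ SimpleGraph.Walk.nil := by
    intro h
    rw [h] at hbaK
    simp at hbaK
  have hKcyc : K.IsCycle := by
    rw [SimpleGraph.Walk.isCycle_def]
    exact ⟨⟨hKtrail⟩, hKnil, hKtnd⟩
  -- the chord s(a,w)
  have hawK : s(a,w) ∉ K.edges := by
    rw [hKe, List.mem_append, List.mem_append]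
    push_neg
    refine ⟨by rw [hQGe]; exact hQe, ?_, ?_⟩
    · intro h
      have ha2 := arc.fst_mem_support_of_mem_edges h
      by_cases haw2 : a = w
      · exact haw' haw2
      · exact side_bside_disjoint hw haS (harcB a ha2 haw2)
    · rw [List.mem_singleton]
      intro h
      rw [Sym2.eq_iff] at h
      rcases h with ⟨h1, -⟩ | ⟨-, h2⟩
      · exact hadj.ne h1
      · exact hbw h2.symm
  have hawG : G.Adj a w := by
    have h := haw
    rw [SimpleGraph.deleteEdges_adj] at h
    exact h.1
  have haK : a ∈ K.support := K.start_mem_support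
  have hwK : w ∈ K.support := by
    rw [hKdef, SimpleGraph.Walk.mem_support_append_iff]
    exact Or.inl QG.end_mem_support
  exact no_chord hG hKcyc hawG haK hwK hawK

/-! ### Layer 7: recursion step lemmas -/

lemma wit_loc [DecidableRel G.Adj] (hG : MinTwoConnected G) {a b w : V} (hadj : G.Adj a b)
    (hw : Wit G a b w)
    (hmin : ∀ w', Wit G a b w' → (Side G a b w).ncard ≤ (Side G a b w').ncard)
    (πd : (G.deleteEdges {s(a,b)}).Walk a b)
    {d : V} (hdS : d ∈ Side G a b w) (hda : d ≠ a) (hdwBg : (Bg G a b w).Adj d w)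
    {w2 : V} (hw2 : Wit G d w w2) : w2 ∈ Side G a b w := by
  classical
  by_contra hw2s
  have haw' : a ≠ w := Ne.symm hw.1
  obtain ⟨p, hp⟩ := bg_del_edge_conn hG πd hadj hw hmin hdwBg
    (Or.inl hw.a_mem_side) (Ne.symm hda) haw' (Or.inl hdS) (Or.inr rfl)
  have hsup : ∀ t ∈ p.support, t ∈ Side G a b w ∪ {w} := bg_support_mem p (Or.inl hdS)
  refine hw2.2.2 ⟨p.transfer _ (fun e he => ?_), fun hmem => ?_⟩
  · rw [SimpleGraph.edgeSet_deleteEdges]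
    refine ⟨(bg_edges_ne p e he).1, ?_⟩
    simp only [Set.mem_singleton_iff]
    rintro rfl
    exact hp he
  · rw [SimpleGraph.Walk.support_transfer] at hmem
    rcases hsup w2 hmem with h | h
    · exact hw2s h
    · exact hw2.2.1 h

lemma side_shrink [DecidableRel G.Adj] (hG : MinTwoConnected G) {a b w : V}
    (hadj : G.Adj a b) (hw : Wit G a b w)
    (hmin : ∀ w', Wit G a b w' → (Side G a b w).ncard ≤ (Side G a b w').ncard)
    (πd : (G.deleteEdges {s(a,b)}).Walk a b)
    {d : V} (hdS : d ∈ Side G a b w) (hda : d ≠ a) (hdwBg : (Bg G a b w).Adj d w)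
    {w2 : V} (hw2 : Wit G d w w2) : Side G d w w2 ⊆ Side G a b w \ {a} := by
  classical
  have hw2S : w2 ∈ Side G a b w := wit_loc hG hadj hw hmin πd hdS hda hdwBg hw2
  have haw' : a ≠ w := Ne.symm hw.1
  have hbw : b ≠ w := Ne.symm hw.2.1
  -- (i): a is not in the small side
  have hna : a ∉ Side G d w w2 := by
    intro hmem
    have hP1 : Avoid (G.deleteEdges {s(d,w)}) w2 d a := hmem
    have haw2 : a ≠ w2 := hP1.ne_snd
    have hbw2 : b ≠ w2 := by
      rintro rfl
      exact hw.b_not_mem_side hw2S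
    have hP2 : Avoid (G.deleteEdges {s(d,w)}) w2 a b := by
      refine Avoid.adj ?_ haw2 hbw2
      rw [SimpleGraph.deleteEdges_adj]
      refine ⟨hadj, ?_⟩
      simp only [Set.mem_singleton_iff]
      intro h
      rw [Sym2.eq_iff] at h
      rcases h with ⟨h1, -⟩ | ⟨h1, -⟩
      · exact hda h1.symm
      · exact haw' h1
    obtain ⟨y₀, hy₀B, hy₀adj⟩ := exists_bside_nbr hw πd
    have hy₀d : y₀ ≠ d := by
      rintro rfl
      exact side_bside_disjoint hw hdS hy₀B
    have hy₀w : y₀ ≠ w := hy₀B.ne_snd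
    have hy₀w2 : y₀ ≠ w2 := by
      rintro rfl
      exact side_bside_disjoint hw hw2S hy₀B
    have hP3 : Avoid (G.deleteEdges {s(d,w)}) w2 b y₀ := by
      obtain ⟨pb, hpb⟩ := hy₀B
      have hpbs := walk_in_bside hw.b_mem_bside pb hpb
      refine ⟨pb.transfer _ (fun e he => ?_), fun hmem2 => ?_⟩
      · rw [SimpleGraph.edgeSet_deleteEdges]
        have heG : e ∈ (G.deleteEdges {s(a,b)}).edgeSet := pb.edges_subset_edgeSet he
        rw [SimpleGraph.edgeSet_deleteEdges] at heG
        refine ⟨heG.1, ?_⟩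
        simp only [Set.mem_singleton_iff]
        rintro rfl
        exact side_bside_disjoint hw hdS
          (hpbs d (pb.fst_mem_support_of_mem_edges he))
      · rw [SimpleGraph.Walk.support_transfer] at hmem2
        exact side_bside_disjoint hw hw2S (hpbs w2 hmem2)
    have hP4 : Avoid (G.deleteEdges {s(d,w)}) w2 y₀ w := by
      refine Avoid.adj ?_ hy₀w2 (Ne.symm hw2.2.1)
      rw [SimpleGraph.deleteEdges_adj]
      have h1 : G.Adj w y₀ := by
        have h2 := hy₀adj
        rw [SimpleGraph.deleteEdges_adj] at h2
        exact h2.1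
      refine ⟨h1.symm, ?_⟩
      simp only [Set.mem_singleton_iff]
      intro h
      rw [Sym2.eq_iff] at h
      rcases h with ⟨h1', -⟩ | ⟨h1', -⟩
      · exact hy₀d h1'
      · exact hy₀w h1'
    exact hw2.2.2 (hP1.trans (hP2.trans (hP3.trans hP4)))
  -- (ii): the small side is inside `Side G a b w`
  intro t ht
  obtain ⟨β, hβ⟩ := ht
  have hwβ : w ∉ β.support := by
    intro hmem
    refine hw2.2.2 ⟨β.takeUntil w hmem, fun h => ?_⟩
    exact hβ (SimpleGraph.Walk.support_takeUntil_subset _ _ h)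
  have haβ : a ∉ β.support := by
    intro hmem
    refine hna ⟨β.takeUntil a hmem, fun h => ?_⟩
    exact hβ (SimpleGraph.Walk.support_takeUntil_subset _ _ h)
  have htS : t ∈ Side G a b w := by
    refine closure_walk (T := {w, a}) ?_ β hdS ?_ t β.end_mem_support
    · intro u v' hu hut hadj' hv't
      simp only [Set.mem_insert_iff, Set.mem_singleton_iff] at hut hv't
      push_neg at hut hv't
      rw [SimpleGraph.deleteEdges_adj] at hadj'
      have hGd : (G.deleteEdges {s(a,b)}).Adj u v' := by
        rw [SimpleGraph.deleteEdges_adj]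
        refine ⟨hadj'.1, ?_⟩
        simp only [Set.mem_singleton_iff]
        intro h
        rw [Sym2.eq_iff] at h
        rcases h with ⟨h1, -⟩ | ⟨h1, h2⟩
        · exact hut.2 h1
        · rw [h1] at hu
          exact hw.b_not_mem_side hu
      exact side_closure hu hGd hv't.1
    · intro t' ht' hmem
      simp only [Set.mem_insert_iff, Set.mem_singleton_iff] at hmem
      rcases hmem with rfl | rfl
      · exact hwβ ht'
      · exact haβ ht'
  refine ⟨htS, ?_⟩
  simp only [Set.mem_singleton_iff]
  rintro rfl
  exact haβ β.end_mem_support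

/-- The key lemma: any cycle edge with a high-degree endpoint yields a degree-two
vertex on the cycle, located inside the minimal witness side. -/
lemma key [DecidableRel G.Adj] (hG : MinTwoConnected G) {v : V} {c : G.Walk v v}
    (hc : c.IsCycle) :
    ∀ n : ℕ, ∀ a b : V, s(a,b) ∈ c.edges → 3 ≤ G.degree a →
    (∃ w0, Wit G a b w0 ∧ (Side G a b w0).ncard ≤ n) →
    ∃ w u, Wit G a b w ∧ u ∈ c.support ∧ G.degree u = 2 ∧ u ≠ a ∧
      (u ∈ Side G a b w ∨ u = w) := by
  classical
  intro n
  induction n using Nat.strong_induction_on with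
  | _ n ih =>
  rintro a b hab hdeg ⟨w0, hw0, hw0n⟩
  -- a minimal witness
  obtain ⟨w, hwF, hmin'⟩ := Finset.exists_min_image
    (Finset.univ.filter (fun w' => Wit G a b w')) (fun w' => (Side G a b w').ncard)
    ⟨w0, by simp [hw0]⟩
  have hw : Wit G a b w := by
    rw [Finset.mem_filter] at hwF
    exact hwF.2
  have hmin : ∀ w', Wit G a b w' → (Side G a b w).ncard ≤ (Side G a b w').ncard := by
    intro w' hw'
    exact hmin' w' (by simp [hw'])
  have hwn : (Side G a b w).ncard ≤ n := le_trans (hmin w0 hw0) hw0n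
  have hadj : G.Adj a b := c.adj_of_mem_edges hab
  -- the peeled path
  obtain ⟨π, hπnd, hπs, hπe, hπab⟩ := peel hc hab
  obtain ⟨πd, hπds, hπde⟩ := pi_to_gd π hπab
  have hwπd : w ∈ πd.support := by
    by_contra h
    exact hw.2.2 ⟨πd, h⟩
  have hwπ : w ∈ π.support := by rwa [hπds] at hwπd
  have hπdnd : πd.support.Nodup := by rw [hπds]; exact hπnd
  set P : (G.deleteEdges {s(a,b)}).Walk a w := πd.takeUntil w hwπd with hPdef
  have hPnd : P.support.Nodup := take_nodup hπdnd hwπd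
  have hPside : ∀ t ∈ P.support, t ≠ w → t ∈ Side G a b w := fun t ht htw =>
    ⟨P.takeUntil t ht, not_mem_takeUntil_of_ne hPnd ht htw⟩
  have hPsupp_c : ∀ t ∈ P.support, t ∈ c.support := by
    intro t ht
    have h1 : t ∈ πd.support := SimpleGraph.Walk.support_takeUntil_subset _ _ ht
    rw [hπds] at h1
    exact hπs t h1
  have hPedge_c : ∀ e ∈ P.edges, e ∈ c.edges := by
    intro e he
    have h1 : e ∈ πd.edges := SimpleGraph.Walk.edges_takeUntil_subset _ _ he
    rw [hπde] at h1
    exact hπe e h1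
  -- the penultimate vertex of P
  cases hrev : P.reverse with
  | nil => exact absurd rfl hw.1
  | @cons _ d _ hwd T =>
      have hdP : d ∈ P.support := by
        have h1 : d ∈ P.reverse.support := by
          rw [hrev, SimpleGraph.Walk.support_cons]
          exact List.mem_cons_of_mem _ T.start_mem_support
        rwa [SimpleGraph.Walk.support_reverse, List.mem_reverse] at h1
      have hedge_dw : s(w,d) ∈ P.edges := by
        have h1 : s(w,d) ∈ P.reverse.edges := by
          rw [hrev, SimpleGraph.Walk.edges_cons]
          exact List.mem_cons_self
        rwa [SimpleGraph.Walk.edges_reverse, List.mem_reverse] at h1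
      have hdw_c : s(d,w) ∈ c.edges := by
        have h1 := hPedge_c _ hedge_dw
        rwa [Sym2.eq_swap] at h1
      have hadj_dwG : G.Adj d w := c.adj_of_mem_edges hdw_c
      by_cases hda : d = a
      · -- the chord case: contradiction
        subst hda
        exact absurd (hwd.symm) (fun h => chord_contra hG hc hadj hw hmin hdeg π hπnd
          hπab hwπ h)
      · have hdS : d ∈ Side G a b w := hPside d hdP (hwd.ne')
        by_cases hdeg2 : G.degree d = 2
        · exact ⟨w, d, hw, hPsupp_c d hdP, hdeg2, hda, Or.inl hdS⟩
        by_cases hwdeg2 : G.degree w = 2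
        · exact ⟨w, w, hw, hPsupp_c w P.end_mem_support, hwdeg2, hw.1, Or.inr rfl⟩
        · -- recursion on the edge s(d, w)
          have hdeg3 : 3 ≤ G.degree d := by
            have h2 := deg_ge_two hc (hPsupp_c d hdP)
            omega
          have hdwBg : (Bg G a b w).Adj d w := ⟨hwd.symm, Or.inl hdS, Or.inr rfl⟩
          obtain ⟨z0, hz0⟩ := exists_wit hG (G.mem_edgeSet.mpr hadj_dwG)
          have hshr := side_shrink hG hadj hw hmin πd hdS hda hdwBg hz0
          have hlt : (Side G d w z0).ncard < (Side G a b w).ncard := by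
            refine Set.ncard_lt_ncard ?_ (Set.toFinite _)
            constructor
            · exact hshr.trans Set.diff_subset
            · intro hsup
              have h3 := hshr (hsup hw.a_mem_side)
              simp at h3
          have hrec := ih ((Side G d w z0).ncard) (lt_of_lt_of_le hlt hwn) d w hdw_c
            hdeg3 ⟨z0, hz0, le_refl _⟩
          obtain ⟨z1, u, hz1, huc, hud2, hune, hupos⟩ := hrec
          refine ⟨w, u, hw, huc, hud2, ?_, Or.inl ?_⟩
          · intro h
            rw [h] at hud2
            omega
          · rcases hupos with h | h
            · exact (side_shrink hG hadj hw hmin πd hdS hda hdwBg hz1 h).1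
            · subst h
              exact wit_loc hG hadj hw hmin πd hdS hda hdwBg hz1

/-- Main theorem: every cycle of a minimally 2-connected graph has two
vertices of degree two. -/
theorem main_thm [DecidableRel G.Adj] (hG : MinTwoConnected G) {v : V} (c : G.Walk v v)
    (hc : c.IsCycle) :
    ∃ a b, a ≠ b ∧ a ∈ c.support ∧ b ∈ c.support ∧ G.degree a = 2 ∧ G.degree b = 2 := by
  classical
  by_cases hall : ∀ t ∈ c.support, G.degree t = 2
  · obtain ⟨x, h, hxc⟩ : ∃ x, G.Adj v x ∧ x ∈ c.support := by
      cases hq : c with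
      | nil => exact absurd (hq ▸ hc) (SimpleGraph.Walk.IsCycle.not_of_nil)
      | @cons _ x _ h q =>
          refine ⟨x, h, ?_⟩
          rw [SimpleGraph.Walk.support_cons]
          exact List.mem_cons_of_mem _ q.start_mem_support
    exact ⟨v, x, h.ne, c.start_mem_support, hxc,
      hall v c.start_mem_support, hall x hxc⟩
  · push_neg at hall
    obtain ⟨x, hxc, hxd⟩ := hall
    have hxd3 : 3 ≤ G.degree x := by
      have := deg_ge_two hc hxc
      omega
    obtain ⟨z₁, z₂, hzne, hz1, hz2⟩ := two_nbrs hc hxc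
    have hz1G : G.Adj x z₁ := c.adj_of_mem_edges hz1
    obtain ⟨w0, hw0⟩ := exists_wit hG (G.mem_edgeSet.mpr hz1G)
    obtain ⟨w, u₁, hwv, hu₁c, hu₁deg, hu₁x, hu₁pos⟩ :=
      key hG hc ((Side G x z₁ w0).ncard) x z₁ hz1 hxd3 ⟨w0, hw0, le_refl _⟩
    obtain ⟨p, q, hpq, hp, hq⟩ := two_nbrs hc hu₁c
    have hpG : G.Adj u₁ p := c.adj_of_mem_edges hp
    have hpc : p ∈ c.support := c.snd_mem_support_of_mem_edges hp
    by_cases hpdeg : G.degree p = 2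
    · exact ⟨u₁, p, hpG.ne, hu₁c, hpc, hu₁deg, hpdeg⟩
    · have hpdeg3 : 3 ≤ G.degree p := by
        have := deg_ge_two hc hpc
        omega
      have hp' : s(p, u₁) ∈ c.edges := by rwa [Sym2.eq_swap] at hp
      obtain ⟨wp0, hwp0⟩ := exists_wit hG (G.mem_edgeSet.mpr hpG.symm)
      obtain ⟨w', u₂, hw', hu₂c, hu₂deg, hu₂p, hu₂pos⟩ :=
        key hG hc ((Side G p u₁ wp0).ncard) p u₁ hp' hpdeg3 ⟨wp0, hwp0, le_refl _⟩
      have hne : u₁ ≠ u₂ := by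
        rintro rfl
        rcases hu₂pos with h | h
        · exact hw'.b_not_mem_side h
        · exact hw'.2.1 h.symm
      exact ⟨u₁, u₂, hne, hu₁c, hu₂c, hu₁deg, hu₂deg⟩

end MinTwoAux

theorem stmt5 {V : Type} [Fintype V] (G : SimpleGraph V) [DecidableRel G.Adj]
    (hG : MinTwoConnected G) {v : V} (c : G.Walk v v) (hc : c.IsCycle) :
    ∃ a b, a ≠ b ∧ a ∈ c.support ∧ b ∈ c.support ∧ G.degree a = 2 ∧ G.degree b = 2 :=
  MinTwoAux.main_thm hG c hc
end

section
/- For every odd integer m > 5, the spectral radius of SK_{2,(m-1)/2} is the largest root of x^3 - x^2 - (m-2)x + (m-3) = 0. -/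
open SimpleGraph

lemma specAux_mem_iff {n : Type} [Fintype n] [DecidableEq n] (A : Matrix n n ℝ) (μ : ℝ) :
    μ ∈ spectrum ℝ A ↔ ∃ v, v ≠ 0 ∧ A.mulVec v = μ • v := by
  rw [spectrum.mem_iff, Matrix.isUnit_iff_isUnit_det, isUnit_iff_ne_zero, not_not,
    ← Matrix.exists_mulVec_eq_zero_iff]
  constructor
  · rintro ⟨v, hv, h⟩
    refine ⟨v, hv, ?_⟩
    rw [Algebra.algebraMap_eq_smul_one, Matrix.sub_mulVec, Matrix.smul_mulVec,
      Matrix.one_mulVec, sub_eq_zero] at h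
    exact h.symm
  · rintro ⟨v, hv, h⟩
    refine ⟨v, hv, ?_⟩
    rw [Algebra.algebraMap_eq_smul_one, Matrix.sub_mulVec, Matrix.smul_mulVec,
      Matrix.one_mulVec, sub_eq_zero, h]

section rows
variable {t : ℕ} (ht : 0 < t) (v : Fin 3 ⊕ Fin t → ℝ)
lemma row_inl0 :
    (adjMat (SK2 t)).mulVec v (Sum.inl 0) =
      v (Sum.inl 2) + ∑ i ∈ Finset.univ.erase (⟨0, ht⟩ : Fin t), v (Sum.inr i) := by
  rw [Matrix.mulVec]
  simp only [dotProduct, Fintype.sum_sum_type, adjMat, Matrix.of_apply]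
  rw [Fin.sum_univ_three, ← Finset.add_sum_erase _ _ (Finset.mem_univ (⟨0, ht⟩ : Fin t))]
  rw [if_neg (by simp : ¬ (SK2 t).Adj (.inl 0) (.inl 0)),
    if_neg (by simp [SK2] : ¬ (SK2 t).Adj (.inl 0) (.inl 1)),
    if_pos (by simp [SK2] : (SK2 t).Adj (.inl 0) (.inl 2)),
    if_neg (by simp [SK2] : ¬ (SK2 t).Adj (.inl 0) (.inr ⟨0, ht⟩))]
  rw [Finset.sum_congr rfl (fun i hi => ?_)]
  · ring
  · have hiz : (i : ℕ) ≠ 0 := fun h => (Finset.mem_erase.1 hi).1 (Fin.ext h)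
    rw [if_pos (by simp [SK2, hiz] : (SK2 t).Adj (.inl 0) (.inr i)), one_mul]
lemma row_inl1 :
    (adjMat (SK2 t)).mulVec v (Sum.inl 1) =
      v (Sum.inr ⟨0, ht⟩) + ∑ i ∈ Finset.univ.erase (⟨0, ht⟩ : Fin t), v (Sum.inr i) := by
  rw [Matrix.mulVec]
  simp only [dotProduct, Fintype.sum_sum_type, adjMat, Matrix.of_apply]
  rw [Fin.sum_univ_three, ← Finset.add_sum_erase _ _ (Finset.mem_univ (⟨0, ht⟩ : Fin t))]
  rw [if_neg (by simp [SK2] : ¬ (SK2 t).Adj (.inl 1) (.inl 0)),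
    if_neg (by simp : ¬ (SK2 t).Adj (.inl 1) (.inl 1)),
    if_neg (by simp [SK2] : ¬ (SK2 t).Adj (.inl 1) (.inl 2)),
    if_pos (by simp [SK2] : (SK2 t).Adj (.inl 1) (.inr ⟨0, ht⟩))]
  rw [Finset.sum_congr rfl (fun i hi => ?_)]
  · ring
  · rw [if_pos (by simp [SK2] : (SK2 t).Adj (.inl 1) (.inr i)), one_mul]
lemma row_inl2 :
    (adjMat (SK2 t)).mulVec v (Sum.inl 2) = v (Sum.inl 0) + v (Sum.inr ⟨0, ht⟩) := by
  rw [Matrix.mulVec]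
  simp only [dotProduct, Fintype.sum_sum_type, adjMat, Matrix.of_apply]
  rw [Fin.sum_univ_three, ← Finset.add_sum_erase _ _ (Finset.mem_univ (⟨0, ht⟩ : Fin t))]
  rw [if_pos (by simp [SK2] : (SK2 t).Adj (.inl 2) (.inl 0)),
    if_neg (by simp [SK2] : ¬ (SK2 t).Adj (.inl 2) (.inl 1)),
    if_neg (by simp : ¬ (SK2 t).Adj (.inl 2) (.inl 2)),
    if_pos (by simp [SK2] : (SK2 t).Adj (.inl 2) (.inr ⟨0, ht⟩))]
  rw [Finset.sum_eq_zero (fun i hi => ?_)]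
  · ring
  · have hiz : (i : ℕ) ≠ 0 := fun h => (Finset.mem_erase.1 hi).1 (Fin.ext h)
    rw [if_neg (by simp [SK2, hiz] : ¬ (SK2 t).Adj (.inl 2) (.inr i)), zero_mul]
lemma row_inr0 :
    (adjMat (SK2 t)).mulVec v (Sum.inr ⟨0, ht⟩) = v (Sum.inl 1) + v (Sum.inl 2) := by
  rw [Matrix.mulVec]
  simp only [dotProduct, Fintype.sum_sum_type, adjMat, Matrix.of_apply]
  rw [Fin.sum_univ_three]
  rw [if_neg (by simp [SK2] : ¬ (SK2 t).Adj (.inr ⟨0, ht⟩) (.inl 0)),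
    if_pos (by simp [SK2] : (SK2 t).Adj (.inr ⟨0, ht⟩) (.inl 1)),
    if_pos (by simp [SK2] : (SK2 t).Adj (.inr ⟨0, ht⟩) (.inl 2))]
  rw [Finset.sum_eq_zero (fun i _ => ?_)]
  · ring
  · rw [if_neg (by simp [SK2] : ¬ (SK2 t).Adj (.inr ⟨0, ht⟩) (.inr i)), zero_mul]
lemma row_inri {i : Fin t} (hiz : (i : ℕ) ≠ 0) :
    (adjMat (SK2 t)).mulVec v (Sum.inr i) = v (Sum.inl 0) + v (Sum.inl 1) := by
  rw [Matrix.mulVec]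
  simp only [dotProduct, Fintype.sum_sum_type, adjMat, Matrix.of_apply]
  rw [Fin.sum_univ_three]
  rw [if_pos (by simp [SK2, hiz] : (SK2 t).Adj (.inr i) (.inl 0)),
    if_pos (by simp [SK2] : (SK2 t).Adj (.inr i) (.inl 1)),
    if_neg (by simp [SK2, hiz] : ¬ (SK2 t).Adj (.inr i) (.inl 2))]
  rw [Finset.sum_eq_zero (fun j _ => ?_)]
  · ring
  · rw [if_neg (by simp [SK2] : ¬ (SK2 t).Adj (.inr i) (.inr j)), zero_mul]
lemma card_erase_zero :
    (Finset.univ.erase (⟨0, ht⟩ : Fin t)).card = t - 1 := by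
  rw [Finset.card_erase_of_mem (Finset.mem_univ _), Finset.card_univ, Fintype.card_fin]
end rows

-- eigenvector lemma
lemma eigen_mem {t : ℕ} (ht3 : 3 ≤ t) (ρ : ℝ)
    (hρT : ρ ^ 3 - ρ ^ 2 - (2 * (t : ℝ) - 1) * ρ + (2 * (t : ℝ) - 2) = 0) :
    ∃ v : Fin 3 ⊕ Fin t → ℝ, v ≠ 0 ∧ (adjMat (SK2 t)).mulVec v = ρ • v := by
  have ht : 0 < t := by omega
  set T : ℝ := (t : ℝ) with hTdef
  refine ⟨Sum.elim ![ρ / 2, ρ / 2, ρ ^ 2 / 2 - (T - 1)]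
    (fun i : Fin t => if (i : ℕ) = 0 then ρ ^ 2 / 2 - (T - 1) else 1), ?_, ?_⟩
  · intro h
    have := congrFun h (Sum.inr (⟨1, by omega⟩ : Fin t))
    simp at this
  · have hcardR : ((Finset.univ.erase (⟨0, ht⟩ : Fin t)).card : ℝ) = T - 1 := by
      rw [card_erase_zero ht, Nat.cast_sub ht]; simp [hTdef]
    have hsum : ∑ i ∈ Finset.univ.erase (⟨0, ht⟩ : Fin t),
        (Sum.elim ![ρ / 2, ρ / 2, ρ ^ 2 / 2 - (T - 1)]
          (fun i : Fin t => if (i : ℕ) = 0 then ρ ^ 2 / 2 - (T - 1) else 1) :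
            Fin 3 ⊕ Fin t → ℝ) (Sum.inr i) = T - 1 := by
      rw [Finset.sum_congr rfl (fun i hi => ?_), Finset.sum_const, nsmul_eq_mul, hcardR, mul_one]
      have hiz : (i : ℕ) ≠ 0 := fun h => (Finset.mem_erase.1 hi).1 (Fin.ext h)
      simp [hiz]
    funext x
    rcases x with j | i
    · fin_cases j
      · rw [show (Sum.inl (⟨0, by norm_num⟩ : Fin 3) : Fin 3 ⊕ Fin t) = Sum.inl 0 from rfl,
          row_inl0 ht, hsum]
        simp only [Pi.smul_apply, Sum.elim_inl, smul_eq_mul]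
        norm_num [Matrix.cons_val_two, Matrix.tail_cons, Matrix.head_cons]
        ring
      · rw [show (Sum.inl (⟨1, by norm_num⟩ : Fin 3) : Fin 3 ⊕ Fin t) = Sum.inl 1 from rfl,
          row_inl1 ht, hsum]
        simp only [Pi.smul_apply, Sum.elim_inl, Sum.elim_inr, smul_eq_mul]
        norm_num [Matrix.cons_val_two, Matrix.tail_cons, Matrix.head_cons]
        ring
      · rw [show (Sum.inl (⟨2, by norm_num⟩ : Fin 3) : Fin 3 ⊕ Fin t) = Sum.inl 2 from rfl,
          row_inl2 ht]
        simp only [Pi.smul_apply, Sum.elim_inl, Sum.elim_inr, smul_eq_mul]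
        norm_num [Matrix.cons_val_two, Matrix.tail_cons, Matrix.head_cons]
        linear_combination (-(1 : ℝ) / 2) * hρT
    · by_cases hi : (i : ℕ) = 0
      · have hiz : i = (⟨0, ht⟩ : Fin t) := Fin.ext hi
        subst hiz
        rw [row_inr0 ht]
        simp only [Pi.smul_apply, Sum.elim_inl, Sum.elim_inr, smul_eq_mul]
        norm_num [Matrix.cons_val_two, Matrix.tail_cons, Matrix.head_cons]
        linear_combination (-(1 : ℝ) / 2) * hρT
      · rw [row_inri _ hi]
        simp only [Pi.smul_apply, Sum.elim_inl, Sum.elim_inr, smul_eq_mul]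
        norm_num [hi]

lemma eigen_ub {t : ℕ} (ht3 : 3 ≤ t) (μ : ℝ) (hμ2 : 2 < μ)
    (v : Fin 3 ⊕ Fin t → ℝ) (hv0 : v ≠ 0) (hv : (adjMat (SK2 t)).mulVec v = μ • v) :
    μ ^ 3 - μ ^ 2 - (2 * (t : ℝ) - 1) * μ + (2 * (t : ℝ) - 2) = 0 := by
  have ht : 0 < t := by omega
  have hμ0 : μ ≠ 0 := by linarith
  have hT1 : (1 : ℝ) ≤ (t : ℝ) := by exact_mod_cast ht
  have hcardR : ((Finset.univ.erase (⟨0, ht⟩ : Fin t)).card : ℝ) = (t : ℝ) - 1 := by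
    rw [card_erase_zero ht, Nat.cast_sub ht]; simp
  have E0 : v (Sum.inl 2) + ∑ i ∈ Finset.univ.erase (⟨0, ht⟩ : Fin t), v (Sum.inr i)
      = μ * v (Sum.inl 0) := by
    have h := congrFun hv (Sum.inl 0); rw [row_inl0 ht] at h
    simp only [Pi.smul_apply, smul_eq_mul] at h; exact h
  have E1 : v (Sum.inr ⟨0, ht⟩) + ∑ i ∈ Finset.univ.erase (⟨0, ht⟩ : Fin t), v (Sum.inr i)
      = μ * v (Sum.inl 1) := by
    have h := congrFun hv (Sum.inl 1); rw [row_inl1 ht] at h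
    simp only [Pi.smul_apply, smul_eq_mul] at h; exact h
  have E2 : v (Sum.inl 0) + v (Sum.inr ⟨0, ht⟩) = μ * v (Sum.inl 2) := by
    have h := congrFun hv (Sum.inl 2); rw [row_inl2 ht] at h
    simp only [Pi.smul_apply, smul_eq_mul] at h; exact h
  have E3 : v (Sum.inl 1) + v (Sum.inl 2) = μ * v (Sum.inr ⟨0, ht⟩) := by
    have h := congrFun hv (Sum.inr ⟨0, ht⟩); rw [row_inr0 ht] at h
    simp only [Pi.smul_apply, smul_eq_mul] at h; exact h
  have hvi : ∀ i ∈ Finset.univ.erase (⟨0, ht⟩ : Fin t),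
      v (Sum.inr i) = (v (Sum.inl 0) + v (Sum.inl 1)) / μ := by
    intro i hi
    have hiz : (i : ℕ) ≠ 0 := fun h => (Finset.mem_erase.1 hi).1 (Fin.ext h)
    have h := congrFun hv (Sum.inr i); rw [row_inri v hiz] at h
    simp only [Pi.smul_apply, smul_eq_mul] at h
    field_simp
    linarith [h]
  have E4 : μ * (∑ i ∈ Finset.univ.erase (⟨0, ht⟩ : Fin t), v (Sum.inr i))
      = ((t : ℝ) - 1) * (v (Sum.inl 0) + v (Sum.inl 1)) := by
    rw [Finset.sum_congr rfl hvi, Finset.sum_const, nsmul_eq_mul, hcardR]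
    field_simp
  set a : ℝ := v (Sum.inl 0)
  set b : ℝ := v (Sum.inl 1)
  set c : ℝ := v (Sum.inl 2)
  set r : ℝ := v (Sum.inr ⟨0, ht⟩)
  set Sv : ℝ := ∑ i ∈ Finset.univ.erase (⟨0, ht⟩ : Fin t), v (Sum.inr i)
  set T : ℝ := (t : ℝ)
  have hQ : μ * (c + r) = (a + b) + (c + r) := by linear_combination -E2 - E3
  have h2 : μ ^ 2 * (a + b) = μ * (c + r) + 2 * (T - 1) * (a + b) := by
    linear_combination -μ * E0 - μ * E1 + 2 * E4
  have hcube : (μ ^ 3 - μ ^ 2 - (2 * T - 1) * μ + (2 * T - 2)) * (a + b) = 0 := by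
    linear_combination (μ - 1) * h2 + μ * hQ
  by_cases hP : a + b = 0
  · exfalso
    apply hv0
    have hq1 : μ ^ 2 + μ - 1 ≠ 0 := by nlinarith
    have hD : (μ ^ 2 + μ - 1) * (a - b) = 0 := by
      linear_combination (-(1 : ℝ) - μ) * E0 + (1 + μ) * E1 - E2 + E3
    have hab : a - b = 0 := by
      rcases mul_eq_zero.1 hD with h | h
      · exact absurd h hq1
      · exact h
    have ha : a = 0 := by linarith
    have hb : b = 0 := by linarith
    have hq2 : μ ^ 2 - 1 ≠ 0 := by nlinarith
    have hcc : (μ ^ 2 - 1) * c = 0 := by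
      linear_combination -μ * E2 - E3 + μ * ha + hb
    have hc : c = 0 := by
      rcases mul_eq_zero.1 hcc with h | h
      · exact absurd h hq2
      · exact h
    have hr0 : r = 0 := by
      have hmr : μ * r = 0 := by rw [← E3, hb, hc]; ring
      rcases mul_eq_zero.1 hmr with h | h
      · exact absurd h hμ0
      · exact h
    funext x
    rcases x with j | i
    · fin_cases j
      · exact ha
      · exact hb
      · exact hc
    · by_cases hi : (i : ℕ) = 0
      · have hiz : i = (⟨0, ht⟩ : Fin t) := Fin.ext hi
        rw [hiz]; exact hr0
      · have hmem' : i ∈ Finset.univ.erase (⟨0, ht⟩ : Fin t) :=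
          Finset.mem_erase.2 ⟨fun h => hi (by rw [h]), Finset.mem_univ _⟩
        have := hvi i hmem'
        rw [this, hP, zero_div]
        rfl
  · exact (mul_eq_zero.1 hcube).resolve_right hP

theorem stmt7 (m : ℕ) (hodd : Odd m) (h5 : 5 < m) :
    IsGreatest {x : ℝ | x ^ 3 - x ^ 2 - ((m : ℝ) - 2) * x + ((m : ℝ) - 3) = 0}
      (specRad (SK2 ((m - 1) / 2))) := by
  obtain ⟨k, hk⟩ := hodd
  set t := (m - 1) / 2 with htdef
  have ht3 : 3 ≤ t := by omega
  have ht : 0 < t := by omega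
  have hmt : m = 2 * t + 1 := by omega
  have hmR : (m : ℝ) = 2 * (t : ℝ) + 1 := by rw [hmt]; push_cast; ring
  have h7 : (7 : ℝ) ≤ (m : ℝ) := by exact_mod_cast (by omega : 7 ≤ m)
  set R : Set ℝ := {x : ℝ | x ^ 3 - x ^ 2 - ((m : ℝ) - 2) * x + ((m : ℝ) - 3) = 0} with hRdef
  -- R is finite
  have hfin : R.Finite := by
    have hP0 : (Polynomial.X ^ 3 - Polynomial.X ^ 2 -
        Polynomial.C ((m : ℝ) - 2) * Polynomial.X + Polynomial.C ((m : ℝ) - 3)) ≠ 0 := by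
      intro h
      have h1 : (Polynomial.X ^ 3 - Polynomial.X ^ 2 -
          Polynomial.C ((m : ℝ) - 2) * Polynomial.X + Polynomial.C ((m : ℝ) - 3)).eval (m : ℝ)
          = 0 := by rw [h]; simp
      simp only [Polynomial.eval_add, Polynomial.eval_sub, Polynomial.eval_pow,
        Polynomial.eval_mul, Polynomial.eval_X, Polynomial.eval_C] at h1
      nlinarith
    have h2 := Polynomial.finite_setOf_isRoot hP0
    have h3 : R = {x | Polynomial.IsRoot (Polynomial.X ^ 3 - Polynomial.X ^ 2 -
        Polynomial.C ((m : ℝ) - 2) * Polynomial.X + Polynomial.C ((m : ℝ) - 3)) x} := by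
      ext x
      simp [hRdef, Polynomial.IsRoot]
    rw [h3]
    exact h2
  -- R has an element greater than 2
  have hf2 : (2 : ℝ) ^ 3 - 2 ^ 2 - ((m : ℝ) - 2) * 2 + ((m : ℝ) - 3) < 0 := by nlinarith
  have hfm : 0 ≤ (m : ℝ) ^ 3 - (m : ℝ) ^ 2 - ((m : ℝ) - 2) * (m : ℝ) + ((m : ℝ) - 3) := by
    nlinarith
  have hcont : ContinuousOn (fun x : ℝ => x ^ 3 - x ^ 2 - ((m : ℝ) - 2) * x + ((m : ℝ) - 3))
      (Set.Icc 2 (m : ℝ)) := by fun_prop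
  have hconn := intermediate_value_Icc (show (2 : ℝ) ≤ (m : ℝ) by linarith) hcont
  obtain ⟨x₀, hx₀I, hx₀⟩ := hconn (Set.mem_Icc.mpr ⟨by simpa using hf2.le, by simpa using hfm⟩)
  have hx₀R : x₀ ∈ R := hx₀
  have hx₀2 : 2 < x₀ := by
    rcases lt_or_eq_of_le hx₀I.1 with h | h
    · exact h
    · exfalso; rw [← h] at hx₀; simp only at hx₀; nlinarith
  -- the largest root ρ
  obtain ⟨ρ, hρR, hρmax⟩ := Set.exists_max_image R id hfin ⟨x₀, hx₀R⟩
  simp only [id] at hρmax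
  have hρ2 : 2 < ρ := lt_of_lt_of_le hx₀2 (hρmax x₀ hx₀R)
  have hρ0 : ρ ^ 3 - ρ ^ 2 - ((m : ℝ) - 2) * ρ + ((m : ℝ) - 3) = 0 := hρR
  have hρT : ρ ^ 3 - ρ ^ 2 - (2 * (t : ℝ) - 1) * ρ + (2 * (t : ℝ) - 2) = 0 := by
    linear_combination hρ0 + (ρ - 1) * hmR
  -- ρ is in the spectrum
  have hmem : ρ ∈ spectrum ℝ (adjMat (SK2 t)) := by
    rw [specAux_mem_iff]
    exact eigen_mem ht3 ρ hρT
  -- every spectral value is at most ρ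
  have hub : ∀ μ ∈ spectrum ℝ (adjMat (SK2 t)), μ ≤ ρ := by
    intro μ hμmem
    rw [specAux_mem_iff] at hμmem
    obtain ⟨v, hv0, hv⟩ := hμmem
    by_cases hμ2 : μ ≤ 2
    · linarith
    push_neg at hμ2
    have hcubic := eigen_ub ht3 μ hμ2 v hv0 hv
    have hμR : μ ∈ R := by
      show μ ^ 3 - μ ^ 2 - ((m : ℝ) - 2) * μ + ((m : ℝ) - 3) = 0
      linear_combination hcubic + (1 - μ) * hmR
    exact hρmax μ hμR
  have hsup : sSup (spectrum ℝ (adjMat (SK2 t))) = ρ := IsGreatest.csSup_eq ⟨hmem, hub⟩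
  show IsGreatest R (specRad (SK2 t))
  rw [show specRad (SK2 t) = sSup (spectrum ℝ (adjMat (SK2 t))) from rfl, hsup]
  exact ⟨hρR, fun x hx => hρmax x hx⟩
end

section
/- For every odd integer m ≥ 7, the largest real root ρ of the polynomial x^3 - x^2 - (m-2)x + (m-3) satisfies √(m-2) < ρ < √(m-1). -/
open SimpleGraph

theorem stmt8 (m : ℕ) (hodd : Odd m) (h7 : 7 ≤ m) (ρ : ℝ)
    (hρ : IsGreatest {x : ℝ | x ^ 3 - x ^ 2 - ((m : ℝ) - 2) * x + ((m : ℝ) - 3) = 0} ρ) :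
    Real.sqrt ((m : ℝ) - 2) < ρ ∧ ρ < Real.sqrt ((m : ℝ) - 1) := by
  have hc : (7:ℝ) ≤ (m:ℝ) := by exact_mod_cast h7
  set c : ℝ := (m:ℝ) with hcdef
  set s : ℝ := Real.sqrt (c - 2) with hsdef
  set t : ℝ := Real.sqrt (c - 1) with htdef
  have hs0 : 0 ≤ s := Real.sqrt_nonneg _
  have ht0 : 0 ≤ t := Real.sqrt_nonneg _
  have hs2 : s ^ 2 = c - 2 := Real.sq_sqrt (by linarith)
  have ht2 : t ^ 2 = c - 1 := Real.sq_sqrt (by linarith)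
  have hst : s < t := by
    have := Real.sqrt_lt_sqrt (by linarith : (0:ℝ) ≤ c - 2) (by linarith : c - 2 < c - 1)
    simpa [hsdef, htdef] using this
  have ht2' : (2:ℝ) < t := by
    rw [htdef, show (2:ℝ) = Real.sqrt 4 by
      rw [show (4:ℝ) = 2^2 by norm_num, Real.sqrt_sq (by norm_num)]]
    exact Real.sqrt_lt_sqrt (by norm_num) (by linarith)
  set f : ℝ → ℝ := fun x => x ^ 3 - x ^ 2 - (c - 2) * x + (c - 3) with hfdef
  have hfs : f s = -1 := by
    have : s ^ 3 = s * (c - 2) := by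
      rw [pow_succ s 2, hs2]; ring
    simp only [hfdef]; rw [this, hs2]; ring
  have hft : f t = t - 2 := by
    have : t ^ 3 = t * (c - 1) := by
      rw [pow_succ t 2, ht2]; ring
    simp only [hfdef]; rw [this, ht2]; ring
  -- root ρ
  have hroot : ρ ^ 3 - ρ ^ 2 - (c - 2) * ρ + (c - 3) = 0 := hρ.1
  -- upper bound: ρ < t
  have hub : ρ < t := by
    by_contra h
    push_neg at h
    have hρ2 : c - 1 ≤ ρ ^ 2 := by
      calc c - 1 = t ^ 2 := ht2.symm
        _ ≤ ρ ^ 2 := by nlinarith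
    have h1 : (0:ℝ) ≤ (ρ ^ 2 - c + 1) * (ρ - 1) :=
      mul_nonneg (by linarith) (by linarith)
    nlinarith
  -- lower bound via IVT
  have hcont : ContinuousOn f (Set.Icc s t) := by
    apply Continuous.continuousOn; fun_prop
  have hsub := intermediate_value_Ioo (le_of_lt hst) hcont
  have h0mem : (0:ℝ) ∈ Set.Ioo (f s) (f t) := by
    rw [hfs, hft]; constructor <;> [norm_num; linarith]
  obtain ⟨r, hrmem, hr0⟩ := hsub h0mem
  have hrρ : r ≤ ρ := hρ.2 (by simpa [hfdef] using hr0)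
  exact ⟨lt_of_lt_of_le hrmem.1 hrρ, hub⟩
end

section
/- For every odd integer m > 5, the spectral radius of SK_{2,(m-1)/2} satisfies √(m-2) < ρ(SK_{2,(m-1)/2}) < √(m-1). -/
open SimpleGraph

section Aux

open Matrix

variable {n : Type} [Fintype n] [DecidableEq n]

private lemma aux_exists_eigenvalue_gt {A : Matrix n n ℝ} (hA : A.IsHermitian) (r : ℝ)
    (x : n → ℝ) (h : r * (x ⬝ᵥ x) < x ⬝ᵥ (A *ᵥ x)) : ∃ i, r < hA.eigenvalues i := by
  by_contra hc
  push_neg at hc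
  set U : Matrix n n ℝ := (hA.eigenvectorUnitary : Matrix n n ℝ) with hUdef
  have hU : U * star U = 1 := (Matrix.mem_unitaryGroup_iff).mp hA.eigenvectorUnitary.2
  have key : ∀ z : n → ℝ, x ⬝ᵥ (U *ᵥ z) = (star U *ᵥ x) ⬝ᵥ z := by
    intro z
    rw [Matrix.dotProduct_mulVec]
    congr 1
    rw [Matrix.star_eq_conjTranspose, Matrix.conjTranspose_eq_transpose_of_trivial,
      Matrix.mulVec_transpose]
  set y : n → ℝ := star U *ᵥ x with hy
  have hxy : x ⬝ᵥ x = y ⬝ᵥ y := by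
    have hUy : U *ᵥ y = x := by
      rw [hy, Matrix.mulVec_mulVec, hU, Matrix.one_mulVec]
    have hx2 : x ⬝ᵥ (U *ᵥ y) = y ⬝ᵥ y := key y
    rwa [hUy] at hx2
  have hQ : x ⬝ᵥ (A *ᵥ x) = ∑ i, hA.eigenvalues i * (y i * y i) := by
    conv_lhs => rw [hA.spectral_theorem, Unitary.conjStarAlgAut_apply, Matrix.mul_assoc, ← Matrix.mulVec_mulVec]
    rw [key, ← Matrix.mulVec_mulVec]
    simp only [dotProduct, Matrix.mulVec_diagonal, RCLike.ofReal_real_eq_id,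
      Function.comp_apply, id_eq, hy]
    exact Finset.sum_congr rfl fun i _ => by ring
  rw [hQ, hxy] at h
  have hle : ∑ i, hA.eigenvalues i * (y i * y i) ≤ r * (y ⬝ᵥ y) := by
    simp only [dotProduct, Finset.mul_sum]
    exact Finset.sum_le_sum fun i _ => mul_le_mul_of_nonneg_right (hc i) (mul_self_nonneg _)
  linarith

private lemma aux_exists_eigenvector {A : Matrix n n ℝ} {μ : ℝ} (hμ : μ ∈ spectrum ℝ A) :
    ∃ v : n → ℝ, v ≠ 0 ∧ A *ᵥ v = μ • v := by
  rw [spectrum.mem_iff, Matrix.isUnit_iff_isUnit_det, isUnit_iff_ne_zero, not_not] at hμ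
  obtain ⟨v, hv0, hv⟩ := (Matrix.exists_mulVec_eq_zero_iff).mpr hμ
  refine ⟨v, hv0, ?_⟩
  rw [Matrix.sub_mulVec, Algebra.algebraMap_eq_smul_one, Matrix.smul_mulVec,
    Matrix.one_mulVec, sub_eq_zero] at hv
  exact hv.symm

private lemma aux_mulVec_apply (A : Matrix n n ℝ) (v : n → ℝ) (i : n) :
    (A *ᵥ v) i = ∑ j, A i j * v j := rfl

private lemma aux_mulVec_mono {A : Matrix n n ℝ} (hA : ∀ i j, 0 ≤ A i j) {v w : n → ℝ}
    (h : ∀ j, v j ≤ w j) (i : n) : (A *ᵥ v) i ≤ (A *ᵥ w) i := by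
  rw [aux_mulVec_apply, aux_mulVec_apply]
  exact Finset.sum_le_sum fun j _ => mul_le_mul_of_nonneg_left (h j) (hA i j)

private lemma aux_abs_mulVec_le {A : Matrix n n ℝ} (hA : ∀ i j, 0 ≤ A i j) (v : n → ℝ)
    (i : n) : |(A *ᵥ v) i| ≤ (A *ᵥ fun j => |v j|) i := by
  rw [aux_mulVec_apply, aux_mulVec_apply]
  refine (Finset.abs_sum_le_sum_abs _ _).trans (Finset.sum_le_sum fun j _ => ?_)
  rw [abs_mul, abs_of_nonneg (hA i j)]

private lemma aux_sum_fin_ite {t : ℕ} (ht : 1 ≤ t) (a b : ℝ) :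
    (∑ j : Fin t, if (j : ℕ) = 0 then a else b) = a + ((t : ℝ) - 1) * b := by
  haveI : NeZero t := ⟨by omega⟩
  have hterm : ∀ j : Fin t,
      (if (j : ℕ) = 0 then a else b) = b + if j = (0 : Fin t) then a - b else 0 := by
    intro j
    rcases eq_or_ne j 0 with hj | hj
    · simp [hj, Fin.val_zero]
    · rw [if_neg (fun h => hj (Fin.ext (by rw [Fin.val_zero]; exact h))), if_neg hj, add_zero]
  rw [Finset.sum_congr rfl fun j _ => hterm j, Finset.sum_add_distrib, Finset.sum_const]
  rw [Finset.sum_ite_eq' Finset.univ (0 : Fin t) (fun _ => a - b), if_pos (Finset.mem_univ _)]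
  simp only [Finset.card_univ, Fintype.card_fin, nsmul_eq_mul]
  ring

private lemma aux_SK2_hermitian (t : ℕ) : (adjMat (SK2 t)).IsHermitian := by
  ext i j
  simp only [adjMat, Matrix.conjTranspose_apply, Matrix.of_apply, star_trivial]
  by_cases h : (SK2 t).Adj i j
  · rw [if_pos h, if_pos h.symm]
  · rw [if_neg h, if_neg (fun h' => h h'.symm)]

private lemma aux_mulVec_SK2 {t : ℕ} (ht : 1 ≤ t) (p q d e : ℝ) :
    (adjMat (SK2 t) *ᵥ Sum.elim ![p, p, q] fun j : Fin t => if (j : ℕ) = 0 then d else e) =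
      Sum.elim ![q + ((t : ℝ) - 1) * e, d + ((t : ℝ) - 1) * e, p + d]
        (fun j : Fin t => if (j : ℕ) = 0 then p + q else p + p) := by
  classical
  funext i
  rw [aux_mulVec_apply]
  simp only [adjMat, Matrix.of_apply]
  rw [Fintype.sum_sum_type]
  rcases i with i | k
  · fin_cases i
    · simp only [Fin.zero_eta, Fin.isValue]
      have hs : ∑ j : Fin t, (if (SK2 t).Adj (Sum.inl 0) (Sum.inr j) then (1:ℝ) else 0) *
          (Sum.elim ![p, p, q] (fun j : Fin t => if (j : ℕ) = 0 then d else e) (Sum.inr j)) =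
          0 + ((t : ℝ) - 1) * e := by
        rw [← aux_sum_fin_ite ht 0 e]
        refine Finset.sum_congr rfl fun j _ => ?_
        rcases eq_or_ne (j : ℕ) 0 with hj | hj <;> simp [SK2, SimpleGraph.fromRel_adj, hj]
      rw [hs]
      simp [SK2, SimpleGraph.fromRel_adj, Fin.sum_univ_three]
    · simp only [Fin.mk_one, Fin.isValue]
      have hs : ∑ j : Fin t, (if (SK2 t).Adj (Sum.inl 1) (Sum.inr j) then (1:ℝ) else 0) *
          (Sum.elim ![p, p, q] (fun j : Fin t => if (j : ℕ) = 0 then d else e) (Sum.inr j)) =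
          d + ((t : ℝ) - 1) * e := by
        rw [← aux_sum_fin_ite ht d e]
        refine Finset.sum_congr rfl fun j _ => ?_
        rcases eq_or_ne (j : ℕ) 0 with hj | hj <;> simp [SK2, SimpleGraph.fromRel_adj, hj]
      rw [hs]
      simp [SK2, SimpleGraph.fromRel_adj, Fin.sum_univ_three]
    · simp only [Fin.reduceFinMk, Fin.isValue]
      have hs : ∑ j : Fin t, (if (SK2 t).Adj (Sum.inl 2) (Sum.inr j) then (1:ℝ) else 0) *
          (Sum.elim ![p, p, q] (fun j : Fin t => if (j : ℕ) = 0 then d else e) (Sum.inr j)) =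
          d + ((t : ℝ) - 1) * 0 := by
        rw [← aux_sum_fin_ite ht d 0]
        refine Finset.sum_congr rfl fun j _ => ?_
        rcases eq_or_ne (j : ℕ) 0 with hj | hj <;> simp [SK2, SimpleGraph.fromRel_adj, hj]
      rw [hs]
      simp [SK2, SimpleGraph.fromRel_adj, Fin.sum_univ_three]
  · have hz : ∑ j : Fin t, (if (SK2 t).Adj (Sum.inr k) (Sum.inr j) then (1:ℝ) else 0) *
        (Sum.elim ![p, p, q] (fun j : Fin t => if (j : ℕ) = 0 then d else e) (Sum.inr j)) = 0 := by
      refine Finset.sum_eq_zero fun j _ => ?_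
      simp [SK2, SimpleGraph.fromRel_adj]
    rw [hz]
    rcases eq_or_ne (k : ℕ) 0 with hk | hk
    · simp [SK2, hk, Fin.sum_univ_three]
    · simp [SK2, hk, Fin.sum_univ_three]

private lemma aux_dot_SK2 {t : ℕ} (ht : 1 ≤ t) (p1 p2 p3 d1 e1 q1 q2 q3 d2 e2 : ℝ) :
    (Sum.elim ![p1, p2, p3] fun j : Fin t => if (j : ℕ) = 0 then d1 else e1) ⬝ᵥ
      (Sum.elim ![q1, q2, q3] fun j : Fin t => if (j : ℕ) = 0 then d2 else e2) =
      p1 * q1 + p2 * q2 + p3 * q3 + d1 * d2 + ((t : ℝ) - 1) * (e1 * e2) := by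
  simp only [dotProduct]
  rw [Fintype.sum_sum_type]
  have hs : ∑ j : Fin t, (Sum.elim ![p1, p2, p3]
        (fun j : Fin t => if (j : ℕ) = 0 then d1 else e1) (Sum.inr j)) *
      (Sum.elim ![q1, q2, q3] (fun j : Fin t => if (j : ℕ) = 0 then d2 else e2) (Sum.inr j)) =
      d1 * d2 + ((t : ℝ) - 1) * (e1 * e2) := by
    rw [← aux_sum_fin_ite ht (d1 * d2) (e1 * e2)]
    refine Finset.sum_congr rfl fun j _ => ?_
    rcases eq_or_ne (j : ℕ) 0 with hj | hj <;> simp [hj]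
  rw [hs]
  simp [Fin.sum_univ_three]
  ring

end Aux

open Matrix in
set_option maxHeartbeats 1000000 in
theorem stmt9 (m : ℕ) (hodd : Odd m) (h5 : 5 < m) :
    Real.sqrt ((m : ℝ) - 2) < specRad (SK2 ((m - 1) / 2)) ∧
      specRad (SK2 ((m - 1) / 2)) < Real.sqrt ((m : ℝ) - 1) := by
  classical
  obtain ⟨k, hk⟩ := hodd
  have hm : m = 2 * ((m - 1) / 2) + 1 := by omega
  set t := (m - 1) / 2 with htdef
  have ht3 : 3 ≤ t := by omega
  have ht1 : 1 ≤ t := by omega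
  have htR : (3 : ℝ) ≤ (t : ℝ) := by exact_mod_cast ht3
  have hmR : (m : ℝ) = 2 * (t : ℝ) + 1 := by
    rw [hm]; push_cast; ring
  set A := adjMat (SK2 t) with hA_def
  haveI : Nonempty (Fin 3 ⊕ Fin t) := ⟨Sum.inl 0⟩
  have hA : A.IsHermitian := aux_SK2_hermitian t
  have hAnn : ∀ i j, 0 ≤ A i j := fun i j => by
    simp only [hA_def, adjMat, Matrix.of_apply]
    split <;> norm_num
  set r : ℝ := Real.sqrt ((m : ℝ) - 2) with hr_def
  have hm2 : (0 : ℝ) ≤ (m : ℝ) - 2 := by rw [hmR]; linarith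
  have hr0 : 0 ≤ r := Real.sqrt_nonneg _
  have hr2 : r ^ 2 = (m : ℝ) - 2 := Real.sq_sqrt hm2
  have hrr : r * r = 2 * (t : ℝ) - 1 := by
    have := hr2
    rw [hmR] at this
    nlinarith [this]
  have hspec_ne : (spectrum ℝ A).Nonempty :=
    ⟨_, hA.eigenvalues_mem_spectrum_real (Classical.arbitrary _)⟩
  have hfin := A.finite_spectrum (R := ℝ)
  have hsup_mem : sSup (spectrum ℝ A) ∈ spectrum ℝ A := hspec_ne.csSup_mem hfin
  have hspecrad : specRad (SK2 t) = sSup (spectrum ℝ A) := rfl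
  have hlow : r < specRad (SK2 t) := by
    rw [hspecrad]
    set x : Fin 3 ⊕ Fin t → ℝ :=
      Sum.elim ![r, r, 1] fun j : Fin t => if (j : ℕ) = 0 then 1 else 2 with hx
    have hAx : A *ᵥ x =
        Sum.elim ![1 + ((t : ℝ) - 1) * 2, 1 + ((t : ℝ) - 1) * 2, r + 1]
          (fun j : Fin t => if (j : ℕ) = 0 then r + 1 else r + r) := aux_mulVec_SK2 ht1 r 1 1 2
    have hQ : x ⬝ᵥ (A *ᵥ x) =
        r * (1 + ((t : ℝ) - 1) * 2) + r * (1 + ((t : ℝ) - 1) * 2) + 1 * (r + 1) +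
          1 * (r + 1) + ((t : ℝ) - 1) * (2 * (r + r)) := by
      rw [hx, hAx, aux_dot_SK2 ht1]
    have hN : x ⬝ᵥ x = r * r + r * r + 1 * 1 + 1 * 1 + ((t : ℝ) - 1) * (2 * 2) := by
      rw [hx, aux_dot_SK2 ht1]
    have hray : r * (x ⬝ᵥ x) < x ⬝ᵥ (A *ᵥ x) := by
      rw [hQ, hN]
      nlinarith [hrr, hr0, htR]
    obtain ⟨i, hi⟩ := aux_exists_eigenvalue_gt hA r x hray
    exact hi.trans_le (le_csSup hfin.bddAbove (hA.eigenvalues_mem_spectrum_real i))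
  refine ⟨hlow, ?_⟩
  rw [hspecrad] at hlow ⊢
  set μ := sSup (spectrum ℝ A) with hμdef
  obtain ⟨v, hv0, hveq⟩ := aux_exists_eigenvector hsup_mem
  set w : Fin 3 ⊕ Fin t → ℝ :=
    Sum.elim ![1, 1, 7/8] fun j : Fin t => if (j : ℕ) = 0 then 7/8 else 1 with hw
  have hwpos : ∀ i, 0 < w i := by
    intro i
    rcases i with i | j
    · fin_cases i <;> norm_num [hw]
    · rcases eq_or_ne (j : ℕ) 0 with hj | hj <;> simp [hw, hj] <;> norm_num
  have hu : A *ᵥ w =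
      Sum.elim ![7/8 + ((t : ℝ) - 1) * 1, 7/8 + ((t : ℝ) - 1) * 1, 1 + 7/8]
        (fun j : Fin t => if (j : ℕ) = 0 then 1 + 7/8 else 1 + 1) := aux_mulVec_SK2 ht1 1 (7/8) (7/8) 1
  have huu : A *ᵥ (A *ᵥ w) =
      Sum.elim ![(1 + 7/8) + ((t : ℝ) - 1) * (1 + 1), (1 + 7/8) + ((t : ℝ) - 1) * (1 + 1),
          (7/8 + ((t : ℝ) - 1) * 1) + (1 + 7/8)]
        (fun j : Fin t => if (j : ℕ) = 0 then (7/8 + ((t : ℝ) - 1) * 1) + (1 + 7/8)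
          else (7/8 + ((t : ℝ) - 1) * 1) + (7/8 + ((t : ℝ) - 1) * 1)) := by
    rw [hu]
    exact aux_mulVec_SK2 ht1 (7/8 + ((t : ℝ) - 1) * 1) (1 + 7/8) (1 + 7/8) (1 + 1)
  have hkey : ∀ i, (A *ᵥ (A *ᵥ w)) i < ((m : ℝ) - 1) * w i := by
    intro i
    rw [huu, hmR]
    rcases i with i | j
    · fin_cases i <;> simp [hw] <;> nlinarith [htR]
    · rcases eq_or_ne (j : ℕ) 0 with hj | hj <;> simp [hw, hj] <;> nlinarith [htR]
  obtain ⟨i0, -, hmax⟩ := Finset.exists_max_image Finset.univ (fun i => |v i| / w i)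
    ⟨Sum.inl 0, Finset.mem_univ _⟩
  set c := |v i0| / w i0 with hc
  have hcw : ∀ i, |v i| ≤ c * w i := fun i =>
    (div_le_iff₀ (hwpos i)).mp (hmax i (Finset.mem_univ i))
  have hcpos : 0 < c := by
    obtain ⟨j, hj⟩ := Function.ne_iff.mp hv0
    exact lt_of_lt_of_le (div_pos (abs_pos.mpr hj) (hwpos j)) (hmax j (Finset.mem_univ j))
  have hvio : |v i0| = c * w i0 := by
    rw [hc, div_mul_cancel₀ _ (hwpos i0).ne']
  have h1 : A *ᵥ (A *ᵥ v) = (μ * μ) • v := by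
    rw [hveq, Matrix.mulVec_smul, hveq, smul_smul]
  have h2 : μ * μ * |v i0| ≤ c * (A *ᵥ (A *ᵥ w)) i0 := by
    have e1 : |((μ * μ) • v) i0| = μ * μ * |v i0| := by
      rw [Pi.smul_apply, smul_eq_mul, abs_mul, abs_of_nonneg (mul_self_nonneg μ)]
    calc μ * μ * |v i0| = |(A *ᵥ (A *ᵥ v)) i0| := by rw [h1, e1]
      _ ≤ (A *ᵥ fun j => |(A *ᵥ v) j|) i0 := aux_abs_mulVec_le hAnn _ i0
      _ ≤ (A *ᵥ (A *ᵥ fun j => |v j|)) i0 :=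
          aux_mulVec_mono hAnn (fun j => aux_abs_mulVec_le hAnn v j) i0
      _ ≤ (A *ᵥ (A *ᵥ fun j => c * w j)) i0 :=
          aux_mulVec_mono hAnn (fun j => aux_mulVec_mono hAnn hcw j) i0
      _ = c * (A *ᵥ (A *ᵥ w)) i0 := by
          have hcwfun : (fun j => c * w j) = c • w := rfl
          rw [hcwfun, Matrix.mulVec_smul, Matrix.mulVec_smul, Pi.smul_apply, smul_eq_mul]
  have hvpos : 0 < |v i0| := by
    rw [hvio]; exact mul_pos hcpos (hwpos i0)
  have h3 : μ * μ < (m : ℝ) - 1 := by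
    have hlt : μ * μ * |v i0| < ((m : ℝ) - 1) * |v i0| := by
      calc μ * μ * |v i0| ≤ c * (A *ᵥ (A *ᵥ w)) i0 := h2
        _ < c * (((m : ℝ) - 1) * w i0) := mul_lt_mul_of_pos_left (hkey i0) hcpos
        _ = ((m : ℝ) - 1) * |v i0| := by rw [hvio]; ring
    exact lt_of_mul_lt_mul_right (by linarith [hlt]) hvpos.le
  have hμ0 : 0 ≤ μ := le_trans hr0 hlow.le
  exact (Real.lt_sqrt hμ0).mpr (by nlinarith [h3])
end
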